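/- arXiv:2012.06107 — 11 statements merged into one kernel-verified Lean document; each statement's English description precedes it below -/
import Mathlib

section
/- For every real ν, every x > 0 and every t > 0, the Shu function admits the representation S_ν(x,t) = (1/2) ∫_{ln(x/(2t))}^∞ exp(-x·cosh(w) + ν·w) dw. -/
open Real MeasureTheory

/-- The Shu function `S_ν(x,t) = (1/2)(x/2)^ν ∫_0^t τ^{-(ν+1)} e^{-τ - x²/(4τ)} dτ`. -/
noncomputable def shu (ν x t : ℝ) : ℝ :=
  (1/2) * (x/2) ^ ν * ∫ τ in (0:ℝ)..t, τ ^ (-(ν+1)) * Real.exp (-τ - x^2 / (4*τ))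

theorem stmt_0 (ν x t : ℝ) (hx : 0 < x) (ht : 0 < t) :
    shu ν x t =
      (1/2) * ∫ w in Set.Ioi (Real.log (x / (2*t))),
        Real.exp (-x * Real.cosh w + ν * w) := by
  have hc : (0:ℝ) < x/2 := by linarith
  have hxt : (0:ℝ) < x / (2*t) := by positivity
  set a := Real.log (x / (2*t)) with ha
  set f : ℝ → ℝ := fun w => (x/2) * Real.exp (-w) with hf
  set g : ℝ → ℝ := fun τ => τ ^ (-(ν+1)) * Real.exp (-τ - x^2 / (4*τ)) with hg
  have hderiv : ∀ w ∈ Set.Ioi a,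
      HasDerivWithinAt f (-(x/2) * Real.exp (-w)) (Set.Ioi a) w := by
    intro w _
    have h : HasDerivAt f ((x/2) * (Real.exp (-w) * (-1))) w :=
      (((hasDerivAt_id w).neg).exp).const_mul (x/2)
    have h2 : (x/2) * (Real.exp (-w) * (-1)) = -(x/2) * Real.exp (-w) := by ring
    rw [h2] at h
    exact h.hasDerivWithinAt
  have hanti : StrictAnti f := by
    intro u v huv
    exact mul_lt_mul_of_pos_left (Real.exp_lt_exp.2 (by linarith)) hc
  have hinj : Set.InjOn f (Set.Ioi a) := hanti.injective.injOn
  have hexpa : Real.exp (-a) = 2*t/x := by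
    rw [ha, Real.exp_neg, Real.exp_log hxt]
    field_simp
  have himg : f '' Set.Ioi a = Set.Ioo 0 t := by
    ext y
    constructor
    · rintro ⟨w, hw, rfl⟩
      have hw' : a < w := hw
      refine ⟨by positivity, ?_⟩
      have h1 : Real.exp (-w) < Real.exp (-a) := Real.exp_lt_exp.2 (by linarith)
      have h2 : (x/2) * Real.exp (-w) < (x/2) * (2*t/x) := by
        rw [← hexpa]; exact mul_lt_mul_of_pos_left h1 hc
      have h3 : (x/2) * (2*t/x) = t := by field_simp
      simpa [f, h3] using h2
    · rintro ⟨hy0, hyt⟩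
      refine ⟨Real.log (x / (2*y)), ?_, ?_⟩
      · have : x / (2*t) < x / (2*y) := by
          apply div_lt_div_of_pos_left hx (by linarith) (by linarith)
        exact Real.log_lt_log hxt this
      · have hxy : (0:ℝ) < x / (2*y) := by positivity
        simp only [f, Real.exp_neg, Real.exp_log hxy]
        field_simp
  have key : ∫ τ in Set.Ioo (0:ℝ) t, g τ
      = ∫ w in Set.Ioi a, |(-(x/2) * Real.exp (-w))| • g (f w) := by
    rw [← himg]
    exact integral_image_eq_integral_abs_deriv_smul measurableSet_Ioi hderiv hinj g
  have hpt : ∀ w : ℝ, (x/2)^ν * (|(-(x/2) * Real.exp (-w))| * g (f w))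
      = Real.exp (-x * Real.cosh w + ν * w) := by
    intro w
    have hE : (0:ℝ) < Real.exp (-w) := Real.exp_pos _
    have habs : |(-(x/2) * Real.exp (-w))| = (x/2) * Real.exp (-w) := by
      rw [abs_mul, abs_neg, abs_of_pos hc, abs_of_pos hE]
    have h1 : ((x/2) * Real.exp (-w)) ^ (-(ν+1))
        = (x/2)^(-(ν+1)) * Real.exp (w * (ν+1)) := by
      rw [Real.mul_rpow hc.le hE.le, Real.rpow_def_of_pos hE, Real.log_exp]
      ring_nf
    have h2 : -((x/2) * Real.exp (-w)) - x^2/(4*((x/2) * Real.exp (-w)))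
        = -x * Real.cosh w := by
      rw [Real.cosh_eq, Real.exp_neg]
      have hEw : (0:ℝ) < Real.exp w := Real.exp_pos _
      field_simp
      ring
    have h3 : (x/2)^ν * (x/2)^(-(ν+1)) = ((x/2):ℝ)⁻¹ := by
      rw [← Real.rpow_add hc, show ν + -(ν+1) = -1 by ring, Real.rpow_neg_one]
    simp only [g, f, habs, h1, h2]
    have h4 : Real.exp (-w) * Real.exp (w * (ν+1)) = Real.exp (ν * w) := by
      rw [← Real.exp_add]; ring_nf
    calc (x/2)^ν * ((x/2) * Real.exp (-w) *
          ((x/2)^(-(ν+1)) * Real.exp (w * (ν+1)) * Real.exp (-x * Real.cosh w)))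
        = ((x/2)^ν * (x/2)^(-(ν+1))) * (x/2) *
            ((Real.exp (-w) * Real.exp (w * (ν+1))) * Real.exp (-x * Real.cosh w)) := by
          ring
      _ = Real.exp (-x * Real.cosh w + ν * w) := by
          rw [h3, h4, inv_mul_cancel₀ (ne_of_gt hc), one_mul, ← Real.exp_add]
          ring_nf
  have hfun : (fun w => (x/2)^ν * (|(-(x/2) * Real.exp (-w))| * g (f w)))
      = fun w => Real.exp (-x * Real.cosh w + ν * w) := funext hpt
  rw [shu, intervalIntegral.integral_of_le ht.le, ← hg,
    MeasureTheory.integral_Ioc_eq_integral_Ioo, key]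
  simp only [smul_eq_mul]
  rw [mul_assoc, ← MeasureTheory.integral_const_mul]
  rw [show (fun w => (x/2)^ν * (|(-(x/2) * Real.exp (-w))| * g (f w)))
      = fun w => Real.exp (-x * Real.cosh w + ν * w) from hfun]
end

section
/- For every real ν, every x > 0 and every real t, the incomplete modified Bessel function satisfies (1/2) · ∫_t^∞ exp(-x·cosh(τ)) · cosh(ν·τ) dτ = (1/2) · ( S_ν(x, x·e^{-t}/2) + S_{-ν}(x, x·e^{-t}/2) ). -/
open Real MeasureTheory

-- quadratic lower bound for cosh
lemma aux_cosh_ge (τ : ℝ) : τ^2/8 ≤ Real.cosh τ := by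
  have h1 : Real.cosh τ = Real.cosh |τ| := (Real.cosh_abs τ).symm
  rw [h1, Real.cosh_eq]
  have h2 : (1 + |τ|/2)^2 ≤ Real.exp |τ| := by
    have := Real.add_one_le_exp (|τ|/2)
    calc (1 + |τ|/2)^2 ≤ (Real.exp (|τ|/2))^2 := by
          apply pow_le_pow_left₀ (by positivity) (by linarith)
      _ = Real.exp |τ| := by rw [← Real.exp_nat_mul]; ring_nf
  have h3 : τ^2/4 ≤ Real.exp |τ| := by nlinarith [abs_nonneg τ, sq_abs τ]
  have h4 : (0:ℝ) < Real.exp (-|τ|) := Real.exp_pos _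
  nlinarith

lemma aux_integrable (x : ℝ) (hx : 0 < x) (μ : ℝ) :
    Integrable (fun τ => Real.exp (-x * Real.cosh τ) * Real.exp (μ * τ)) := by
  have hg : Integrable (fun τ : ℝ => Real.exp (2*μ^2/x) * Real.exp (-(x/8) * (τ - 4*μ/x)^2)) :=
    ((integrable_exp_neg_mul_sq (show (0:ℝ) < x/8 by positivity)).comp_sub_right (4*μ/x)).const_mul _
  apply hg.mono'
  · exact (Real.continuous_exp.comp (by continuity)).mul
      (Real.continuous_exp.comp (by continuity)) |>.aestronglyMeasurable
  · filter_upwards with τ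
    rw [Real.norm_eq_abs, abs_of_pos (by positivity), ← Real.exp_add, ← Real.exp_add]
    apply Real.exp_le_exp.mpr
    have := aux_cosh_ge τ
    have hx8 : -x * Real.cosh τ ≤ -(x/8) * τ^2 := by nlinarith
    have : 2*μ^2/x + -(x/8)*(τ - 4*μ/x)^2 = -(x/8)*τ^2 + μ*τ := by field_simp; ring
    linarith [hx8, this.ge, this.le]

lemma aux_image (x t : ℝ) (hx : 0 < x) :
    (fun τ => (x/2) * Real.exp (-τ)) '' Set.Ioi t = Set.Ioo 0 (x * Real.exp (-t) / 2) := by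
  ext y
  simp only [Set.mem_image, Set.mem_Ioi, Set.mem_Ioo]
  constructor
  · rintro ⟨τ, hτ, rfl⟩
    refine ⟨by positivity, ?_⟩
    have : Real.exp (-τ) < Real.exp (-t) := Real.exp_lt_exp.mpr (by linarith)
    nlinarith
  · rintro ⟨hy0, hyb⟩
    refine ⟨Real.log (x / (2*y)), ?_, ?_⟩
    · rw [Real.lt_log_iff_exp_lt (by positivity)]
      rw [lt_div_iff₀ (by positivity)]
      have h := mul_lt_mul_of_pos_right hyb (Real.exp_pos t)
      have : x * Real.exp (-t) / 2 * Real.exp t = x/2 := by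
        rw [Real.exp_neg]; field_simp
      nlinarith [Real.exp_pos t]
    · rw [Real.exp_neg, Real.exp_log (by positivity)]
      field_simp

lemma aux_key (ν x t : ℝ) (hx : 0 < x) :
    shu ν x (x * Real.exp (-t) / 2) =
      (1/2) * ∫ τ in Set.Ioi t, Real.exp (-x * Real.cosh τ) * Real.exp (ν * τ) := by
  have hb : 0 < x * Real.exp (-t) / 2 := by positivity
  set g : ℝ → ℝ := fun u => u ^ (-(ν+1)) * Real.exp (-u - x^2 / (4*u)) with hg
  have hderiv : ∀ τ ∈ Set.Ioi t,
      HasDerivWithinAt (fun τ => (x/2) * Real.exp (-τ)) (-((x/2) * Real.exp (-τ))) (Set.Ioi t) τ := by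
    intro τ _
    have h1 : HasDerivAt (fun τ : ℝ => Real.exp (-τ)) (-Real.exp (-τ)) τ := by
      simpa using (hasDerivAt_neg τ).exp
    simpa [mul_comm, mul_neg] using ((h1.const_mul (x/2)).hasDerivWithinAt)
  have hinj : Set.InjOn (fun τ => (x/2) * Real.exp (-τ)) (Set.Ioi t) := by
    intro a _ b _ hab
    have h := mul_left_cancel₀ (show x/2 ≠ 0 by positivity) hab
    simpa using h
  have himg := aux_image x t hx
  have hcov := integral_image_eq_integral_abs_deriv_smul measurableSet_Ioi hderiv hinj g
  rw [himg] at hcov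
  unfold shu
  rw [intervalIntegral.integral_of_le hb.le, MeasureTheory.integral_Ioc_eq_integral_Ioo, hcov,
    ← MeasureTheory.integral_const_mul, ← MeasureTheory.integral_const_mul]
  apply MeasureTheory.setIntegral_congr_fun measurableSet_Ioi
  intro τ _
  have he : (0:ℝ) < Real.exp (-τ) := Real.exp_pos _
  simp only [smul_eq_mul, abs_neg, abs_of_pos (show (0:ℝ) < x/2*Real.exp (-τ) by positivity), hg]
  have h1 : ((x/2) * Real.exp (-τ)) ^ (-(ν+1)) = (x/2)^(-(ν+1)) * Real.exp (-τ * -(ν+1)) := by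
    rw [Real.mul_rpow (by positivity) (by positivity), ← Real.exp_mul]
  have h2 : -(x/2*Real.exp (-τ)) - x^2/(4*(x/2*Real.exp (-τ))) = -x * Real.cosh τ := by
    rw [Real.cosh_eq, Real.exp_neg]
    field_simp
    ring
  have h3 : (x/2)^ν * (x/2)^(-(ν+1)) = (x/2)⁻¹ := by
    rw [← Real.rpow_add (by positivity), show ν + -(ν+1) = -1 by ring, Real.rpow_neg_one]
  have h4 : Real.exp (-τ) * Real.exp (-τ * -(ν+1)) = Real.exp (ν*τ) := by
    rw [← Real.exp_add]; ring_nf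
  have h5 : (x/2) * (x/2)⁻¹ = 1 := mul_inv_cancel₀ (by positivity)
  rw [h1, h2]
  rw [show (1:ℝ)/2*(x/2)^ν * (x/2 * Real.exp (-τ) *
      ((x/2)^(-(ν+1)) * Real.exp (-τ*-(ν+1)) * Real.exp (-x*Real.cosh τ))) =
    1/2 * ((x/2) * ((x/2)^ν * (x/2)^(-(ν+1)))) *
      (Real.exp (-τ) * Real.exp (-τ*-(ν+1))) * Real.exp (-x*Real.cosh τ) from by ring,
    h3, h4, h5]
  ring

theorem stmt_3 (ν x t : ℝ) (hx : 0 < x) :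
    (1/2) * ∫ τ in Set.Ioi t, Real.exp (-x * Real.cosh τ) * Real.cosh (ν * τ) =
      (1/2) * (shu ν x (x * Real.exp (-t) / 2) + shu (-ν) x (x * Real.exp (-t) / 2)) := by
  rw [aux_key ν x t hx, aux_key (-ν) x t hx]
  have hI1 : IntegrableOn (fun τ => Real.exp (-x * Real.cosh τ) * Real.exp (ν * τ))
      (Set.Ioi t) := (aux_integrable x hx ν).integrableOn
  have hI2 : IntegrableOn (fun τ => Real.exp (-x * Real.cosh τ) * Real.exp (-ν * τ))
      (Set.Ioi t) := (aux_integrable x hx (-ν)).integrableOn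
  have hpt : ∀ τ : ℝ, Real.exp (-x * Real.cosh τ) * Real.exp (ν * τ) +
      Real.exp (-x * Real.cosh τ) * Real.exp (-ν * τ) =
      2 * (Real.exp (-x * Real.cosh τ) * Real.cosh (ν * τ)) := by
    intro τ; rw [Real.cosh_eq (ν*τ), neg_mul]; ring
  have hsum : ((∫ τ in Set.Ioi t, Real.exp (-x * Real.cosh τ) * Real.exp (ν * τ)) +
      (∫ τ in Set.Ioi t, Real.exp (-x * Real.cosh τ) * Real.exp (-ν * τ))) =
      2 * ∫ τ in Set.Ioi t, Real.exp (-x * Real.cosh τ) * Real.cosh (ν * τ) := by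
    rw [← MeasureTheory.integral_add hI1 hI2]
    simp_rw [hpt]
    exact MeasureTheory.integral_const_mul 2 _
  linarith
end

section
/- For every real ν, every x > 0 and every t > 0, the Shu function satisfies the first recurrence relation -(2ν/x)·S_ν(x,t) = ∂S_{ν-1}/∂t (x,t) + S_{ν-1}(x,t) - S_{ν+1}(x,t), where ∂S_{ν-1}/∂t denotes the partial derivative of S_{ν-1}(x,t) with respect to t. -/
open Real MeasureTheory

namespace ShuAux

lemma tendsto_aux (x p : ℝ) (hx : 0 < x) :
    Filter.Tendsto (fun τ : ℝ => τ ^ p * Real.exp (-τ - x^2 / (4*τ)))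
      (nhdsWithin 0 (Set.Ioi 0)) (nhds 0) := by
  have h1 : Filter.Tendsto (fun u : ℝ => u ^ (-p) * Real.exp (-(x^2/4) * u))
      Filter.atTop (nhds 0) :=
    tendsto_rpow_mul_exp_neg_mul_atTop_nhds_zero (-p) (x^2/4) (by positivity)
  have h2 := h1.comp tendsto_inv_nhdsGT_zero
  have h3 : Filter.Tendsto (fun τ : ℝ => Real.exp (-τ))
      (nhdsWithin 0 (Set.Ioi 0)) (nhds 1) := by
    have : Filter.Tendsto (fun τ : ℝ => Real.exp (-τ)) (nhds 0) (nhds 1) := by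
      simpa [Function.comp_def] using (Real.continuous_exp.comp continuous_neg).tendsto 0
    exact this.mono_left nhdsWithin_le_nhds
  have h4 := h2.mul h3
  rw [zero_mul] at h4
  refine h4.congr' ?_
  filter_upwards [self_mem_nhdsWithin] with τ (hτ : τ ∈ Set.Ioi 0)
  have hτ0 : (0:ℝ) < τ := hτ
  simp only [Function.comp_apply]
  rw [mul_assoc, ← Real.exp_add]
  congr 1
  · rw [Real.inv_rpow hτ0.le, Real.rpow_neg hτ0.le, inv_inv]
  · ring_nf

lemma contAt_aux (x p : ℝ) {τ : ℝ} (hτ : τ ≠ 0) :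
    ContinuousAt (fun τ : ℝ => τ ^ p * Real.exp (-τ - x^2 / (4*τ))) τ := by
  apply ContinuousAt.mul
  · exact Real.continuousAt_rpow_const τ p (Or.inl hτ)
  · apply Real.continuous_exp.continuousAt.comp
    exact (continuousAt_id.neg).sub
      (continuousAt_const.div (by fun_prop) (by simp [hτ]))

lemma cont_ext (x t p : ℝ) (hx : 0 < x) :
    ContinuousOn (fun τ : ℝ => if τ ≤ 0 then 0
        else τ ^ p * Real.exp (-τ - x^2 / (4*τ))) (Set.Icc 0 t) := by
  intro τ hτ
  rcases eq_or_lt_of_le hτ.1 with rfl | hτ0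
  · have key : Filter.Tendsto (fun τ : ℝ => if τ ≤ 0 then 0
        else τ ^ p * Real.exp (-τ - x^2 / (4*τ))) (nhdsWithin 0 (Set.Ioi 0)) (nhds 0) := by
      refine (tendsto_aux x p hx).congr' ?_
      filter_upwards [self_mem_nhdsWithin] with s (hs : s ∈ Set.Ioi 0)
      simp [not_le.2 (Set.mem_Ioi.1 hs)]
    have key2 : Filter.Tendsto (fun τ : ℝ => if τ ≤ 0 then 0
        else τ ^ p * Real.exp (-τ - x^2 / (4*τ)))
        (nhdsWithin 0 (insert 0 (Set.Ioi 0))) (nhds 0) := by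
      rw [nhdsWithin_insert]
      refine Filter.Tendsto.sup ?_ key
      simpa using tendsto_pure_nhds
        (fun τ : ℝ => if τ ≤ 0 then 0 else τ ^ p * Real.exp (-τ - x^2 / (4*τ))) 0
    have hsub : Set.Icc (0:ℝ) t ⊆ insert 0 (Set.Ioi 0) := by
      intro s hs
      rcases eq_or_lt_of_le hs.1 with rfl | h
      · exact Set.mem_insert _ _
      · exact Set.mem_insert_of_mem _ h
    have : (fun τ : ℝ => if τ ≤ 0 then 0
        else τ ^ p * Real.exp (-τ - x^2 / (4*τ))) 0 = 0 := by simp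
    unfold ContinuousWithinAt
    rw [this]
    exact key2.mono_left (nhdsWithin_mono 0 hsub)
  · have h1 : ContinuousAt (fun τ : ℝ => if τ ≤ 0 then 0
        else τ ^ p * Real.exp (-τ - x^2 / (4*τ))) τ := by
      refine (contAt_aux x p (ne_of_gt hτ0)).congr ?_
      filter_upwards [lt_mem_nhds hτ0] with s hs
      simp [not_le.2 hs]
    exact h1.continuousWithinAt

lemma integrable_aux (x t p : ℝ) (hx : 0 < x) (ht : 0 < t) :
    IntervalIntegrable (fun τ : ℝ => τ ^ p * Real.exp (-τ - x^2 / (4*τ))) volume 0 t := by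
  have hcont := cont_ext x t p hx
  have hint : IntegrableOn (fun τ : ℝ => if τ ≤ 0 then 0
      else τ ^ p * Real.exp (-τ - x^2 / (4*τ))) (Set.Icc 0 t) := hcont.integrableOn_Icc
  rw [intervalIntegrable_iff_integrableOn_Ioc_of_le ht.le]
  refine (hint.mono_set Set.Ioc_subset_Icc_self).congr_fun ?_ measurableSet_Ioc
  intro τ hτ
  simp [not_le.2 hτ.1]


lemma deriv_shu (ν x t : ℝ) (hx : 0 < x) (ht : 0 < t) :
    HasDerivAt (fun s => shu (ν-1) x s)
      ((1/2) * (x/2) ^ (ν-1) * (t ^ (-ν) * Real.exp (-t - x^2 / (4*t)))) t := by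
  have hmeas : StronglyMeasurableAtFilter
      (fun τ : ℝ => τ ^ (-ν) * Real.exp (-τ - x^2 / (4*τ))) (nhds t) volume :=
    ContinuousAt.stronglyMeasurableAtFilter isOpen_Ioi
      (fun s hs => contAt_aux x (-ν) (ne_of_gt hs)) t ht
  have h := intervalIntegral.integral_hasDerivAt_right
    (integrable_aux x t (-ν) hx ht) hmeas (contAt_aux x (-ν) ht.ne')
  have h2 := h.const_mul ((1/2) * (x/2) ^ (ν-1))
  have he : -(ν-1+1) = -ν := by ring
  simpa [shu, he, mul_assoc] using h2

lemma hasDeriv_phi (ν x : ℝ) {τ : ℝ} (hx : 0 < x) (hτ : 0 < τ) :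
    HasDerivAt (fun τ : ℝ => τ ^ (-ν) * Real.exp (-τ - x^2 / (4*τ)))
      ((-ν * τ ^ (-(ν+1)) - τ ^ (-ν) + (x^2/4) * τ ^ (-(ν+2)))
        * Real.exp (-τ - x^2 / (4*τ))) τ := by
  have h1 : HasDerivAt (fun τ : ℝ => τ ^ (-ν)) (-ν * τ ^ (-ν - 1)) τ :=
    Real.hasDerivAt_rpow_const (Or.inl hτ.ne')
  have h2 : HasDerivAt (fun τ : ℝ => -τ - x^2 / (4*τ)) (-1 + x^2 / (4*τ^2)) τ := by
    have ha : HasDerivAt (fun τ : ℝ => -τ) (-1) τ := (hasDerivAt_id τ).neg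
    have hb : HasDerivAt (fun τ : ℝ => x^2 / (4*τ))
        ((0 * (4*τ) - x^2 * 4) / (4*τ)^2) τ := by
      exact (hasDerivAt_const τ (x^2)).div
        (by simpa using (hasDerivAt_id τ).const_mul (4:ℝ)) (by positivity : (0:ℝ) < 4*τ).ne'
    refine (ha.sub hb).congr_deriv ?_
    field_simp
    ring
  have h3 := (Real.hasDerivAt_exp (-τ - x^2 / (4*τ))).comp τ h2
  have h4 := h1.mul h3
  refine h4.congr_deriv ?_
  have e1 : τ ^ (-(ν+1)) = τ ^ (-ν) / τ := by
    rw [show -(ν+1) = -ν - 1 by ring, Real.rpow_sub hτ, Real.rpow_one]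
  have e2 : τ ^ (-(ν+2)) = τ ^ (-ν) / τ^2 := by
    rw [show -(ν+2) = -ν - 2 by ring, Real.rpow_sub hτ,
      show (2:ℝ) = ((2:ℕ):ℝ) by norm_num, Real.rpow_natCast]
  have e3 : τ ^ (-ν - 1) = τ ^ (-ν) / τ := by
    rw [Real.rpow_sub hτ, Real.rpow_one]
  rw [e1, e2, e3, Function.comp_def]
  field_simp
  ring

lemma key_integral (ν x t : ℝ) (hx : 0 < x) (ht : 0 < t) :
    (∫ τ in (0:ℝ)..t, (-ν * τ ^ (-(ν+1)) - τ ^ (-ν) + (x^2/4) * τ ^ (-(ν+2)))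
        * Real.exp (-τ - x^2 / (4*τ)))
      = t ^ (-ν) * Real.exp (-t - x^2 / (4*t)) := by
  have hint : IntervalIntegrable (fun τ : ℝ =>
      (-ν * τ ^ (-(ν+1)) - τ ^ (-ν) + (x^2/4) * τ ^ (-(ν+2)))
        * Real.exp (-τ - x^2 / (4*τ))) volume 0 t := by
    have h1 := (integrable_aux x t (-(ν+1)) hx ht).const_mul (-ν)
    have h0 := integrable_aux x t (-ν) hx ht
    have h2 := (integrable_aux x t (-(ν+2)) hx ht).const_mul (x^2/4)
    have := (h1.sub h0).add h2
    refine this.congr ?_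
    intro τ _
    dsimp only
    ring -- maybe need EventuallyEq form
  have hcont := cont_ext x t (-ν) hx
  have hderiv : ∀ τ ∈ Set.Ioo (0:ℝ) t, HasDerivWithinAt
      (fun τ : ℝ => if τ ≤ 0 then 0 else τ ^ (-ν) * Real.exp (-τ - x^2 / (4*τ)))
      ((-ν * τ ^ (-(ν+1)) - τ ^ (-ν) + (x^2/4) * τ ^ (-(ν+2)))
        * Real.exp (-τ - x^2 / (4*τ))) (Set.Ioi τ) τ := by
    intro τ hτ
    have hd : HasDerivAt
        (fun τ : ℝ => if τ ≤ 0 then 0 else τ ^ (-ν) * Real.exp (-τ - x^2 / (4*τ)))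
        ((-ν * τ ^ (-(ν+1)) - τ ^ (-ν) + (x^2/4) * τ ^ (-(ν+2)))
          * Real.exp (-τ - x^2 / (4*τ))) τ := by
      refine (hasDeriv_phi ν x hx hτ.1).congr_of_eventuallyEq ?_
      filter_upwards [lt_mem_nhds hτ.1] with s hs
      simp [not_le.2 hs]
    exact hd.hasDerivWithinAt
  have := intervalIntegral.integral_eq_sub_of_hasDeriv_right_of_le ht.le hcont hderiv hint
  rw [this]
  simp [not_le.2 ht]

end ShuAux


theorem stmt_5 (ν x t : ℝ) (hx : 0 < x) (ht : 0 < t) :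
    -(2*ν/x) * shu ν x t =
      deriv (fun s => shu (ν-1) x s) t + shu (ν-1) x t - shu (ν+1) x t := by
  have hx2 : (0:ℝ) < x/2 := by positivity
  rw [(ShuAux.deriv_shu ν x t hx ht).deriv]
  set I0 : ℝ := ∫ τ in (0:ℝ)..t, τ ^ (-ν) * Real.exp (-τ - x^2 / (4*τ)) with hI0
  set I1 : ℝ := ∫ τ in (0:ℝ)..t, τ ^ (-(ν+1)) * Real.exp (-τ - x^2 / (4*τ)) with hI1
  set I2 : ℝ := ∫ τ in (0:ℝ)..t, τ ^ (-(ν+2)) * Real.exp (-τ - x^2 / (4*τ)) with hI2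
  have hkey : t ^ (-ν) * Real.exp (-t - x^2 / (4*t))
      = -ν * I1 - I0 + (x^2/4) * I2 := by
    rw [← ShuAux.key_integral ν x t hx ht, hI0, hI1, hI2]
    have heq : ∀ τ : ℝ, (-ν * τ ^ (-(ν+1)) - τ ^ (-ν) + (x^2/4) * τ ^ (-(ν+2)))
          * Real.exp (-τ - x^2 / (4*τ))
        = (-ν * (τ ^ (-(ν+1)) * Real.exp (-τ - x^2 / (4*τ)))
            - τ ^ (-ν) * Real.exp (-τ - x^2 / (4*τ)))
          + (x^2/4) * (τ ^ (-(ν+2)) * Real.exp (-τ - x^2 / (4*τ))) := fun τ => by ring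
    simp_rw [heq]
    have h1 := (ShuAux.integrable_aux x t (-(ν+1)) hx ht).const_mul (-ν)
    have h0 := ShuAux.integrable_aux x t (-ν) hx ht
    have h2 := (ShuAux.integrable_aux x t (-(ν+2)) hx ht).const_mul (x^2/4)
    rw [intervalIntegral.integral_add (h1.sub h0) h2,
      intervalIntegral.integral_sub h1 h0,
      intervalIntegral.integral_const_mul, intervalIntegral.integral_const_mul]
  have hshu : shu ν x t = (1/2) * (x/2) ^ ν * I1 := rfl
  have hshu0 : shu (ν-1) x t = (1/2) * (x/2) ^ (ν-1) * I0 := by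
    rw [shu, hI0, show -(ν-1+1) = -ν by ring]
  have hshu2 : shu (ν+1) x t = (1/2) * (x/2) ^ (ν+1) * I2 := by
    rw [shu, hI2, show -(ν+1+1) = -(ν+2) by ring]
  rw [hshu, hshu0, hshu2, hkey]
  have e1 : (x/2) ^ (ν-1) = (x/2) ^ ν / (x/2) := by
    rw [Real.rpow_sub hx2, Real.rpow_one]
  have e2 : (x/2) ^ (ν+1) = (x/2) ^ ν * (x/2) := by
    rw [Real.rpow_add hx2, Real.rpow_one]
  rw [e1, e2]
  field_simp
  ring
end

section
/- For every real ν, every x > 0 and every t > 0, the Shu function satisfies the second recurrence relation -2·∂S_ν/∂x (x,t) = ∂S_{ν-1}/∂t (x,t) + S_{ν-1}(x,t) + S_{ν+1}(x,t), where ∂S_ν/∂x denotes the partial derivative with respect to the argument x and ∂S_{ν-1}/∂t denotes the partial derivative with respect to the endpoint t. -/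
open Real MeasureTheory

open Real MeasureTheory Set Filter Topology

noncomputable def sf (a x τ : ℝ) : ℝ := τ ^ a * Real.exp (-τ - x^2 / (4*τ))

lemma sf_nonneg (a x τ : ℝ) (hτ : 0 ≤ τ) : 0 ≤ sf a x τ := by
  unfold sf; positivity

lemma sf_meas (a x : ℝ) : Measurable (sf a x) := by
  unfold sf
  exact (measurable_id.pow_const a).mul
    ((measurable_id.neg.sub (measurable_const.div (measurable_const.mul measurable_id))).exp)

lemma sf_tendsto_zero (a x : ℝ) (hx : 0 < x) :
    Tendsto (sf a x) (𝓝[>] (0:ℝ)) (𝓝 0) := by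
  have hc : (0:ℝ) < x^2/4 := by positivity
  have A := tendsto_rpow_mul_exp_neg_mul_atTop_nhds_zero (-a) (x^2/4) hc
  have B : Tendsto (fun τ : ℝ => (τ⁻¹) ^ (-a) * Real.exp (-(x^2/4) * τ⁻¹))
      (𝓝[>] (0:ℝ)) (𝓝 0) := A.comp tendsto_inv_nhdsGT_zero
  have C : Tendsto (fun τ : ℝ => Real.exp (-τ)) (𝓝[>] (0:ℝ)) (𝓝 1) := by
    have : Tendsto (fun τ : ℝ => Real.exp (-τ)) (𝓝 (0:ℝ)) (𝓝 1) := by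
      exact (Real.continuous_exp.comp continuous_neg).tendsto' 0 1 (by simp)
    exact this.mono_left nhdsWithin_le_nhds
  have D := B.mul C
  rw [zero_mul] at D
  refine D.congr' ?_
  filter_upwards [self_mem_nhdsWithin] with τ (hτ : 0 < τ)
  have h1 : (τ⁻¹) ^ (-a) = τ ^ a := by
    rw [Real.inv_rpow hτ.le, ← Real.rpow_neg hτ.le, neg_neg]
  have h2 : Real.exp (-(x^2/4) * τ⁻¹) * Real.exp (-τ) = Real.exp (-τ - x^2/(4*τ)) := by
    rw [← Real.exp_add]; congr 1; field_simp; ring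
  unfold sf
  rw [mul_assoc, h1, h2]

lemma sf_bound (a x t : ℝ) (hx : 0 < x) (ht : 0 < t) :
    ∃ M, ∀ τ ∈ Ioc (0:ℝ) t, sf a x τ ≤ M := by
  set c : ℝ := x^2/4 with hc
  have hcpos : 0 < c := by positivity
  set n : ℕ := ⌈-a⌉₊ with hn
  have han : 0 ≤ a + n := by
    have := Nat.le_ceil (-a)
    linarith
  refine ⟨(n.factorial / c^n) * t ^ (a + n), fun τ hτ => ?_⟩
  obtain ⟨hτ0, hτt⟩ := hτ
  have hE : Real.exp (-τ - x^2/(4*τ)) ≤ Real.exp (-(c/τ)) := by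
    apply Real.exp_le_exp.2
    have : x^2/(4*τ) = c/τ := by rw [hc]; ring
    rw [this]
    linarith
  have hexp : Real.exp (-(c/τ)) ≤ n.factorial * τ^n / c^n := by
    rw [Real.exp_neg]
    rw [inv_le_comm₀ (Real.exp_pos _) (by positivity)]
    have h1 : (c/τ)^n / n.factorial ≤ Real.exp (c/τ) :=
      Real.pow_div_factorial_le_exp _ (by positivity) n
    have h2 : (n.factorial * τ^n / c^n)⁻¹ = (c/τ)^n / n.factorial := by
      rw [inv_div]
      field_simp
      rw [← mul_pow, mul_div_cancel₀ c hτ0.ne']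
    rw [h2]; exact h1
  have h3 : sf a x τ ≤ τ ^ a * (n.factorial * τ^n / c^n) := by
    unfold sf
    exact mul_le_mul_of_nonneg_left (hE.trans hexp) (by positivity)
  refine h3.trans ?_
  have h4 : τ ^ a * (↑n.factorial * τ^n / c^n) = (n.factorial / c^n) * τ ^ (a + n) := by
    rw [Real.rpow_add hτ0, Real.rpow_natCast]
    ring
  rw [h4]
  apply mul_le_mul_of_nonneg_left _ (by positivity)
  exact Real.rpow_le_rpow hτ0.le hτt han

lemma sf_integrableOn (a x t : ℝ) (hx : 0 < x) (ht : 0 < t) :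
    IntegrableOn (sf a x) (Ioc 0 t) := by
  obtain ⟨M, hM⟩ := sf_bound a x t hx ht
  apply Measure.integrableOn_of_bounded (M := M) measure_Ioc_lt_top.ne
    (sf_meas a x).aestronglyMeasurable
  filter_upwards [ae_restrict_mem measurableSet_Ioc] with τ hτ
  rw [Real.norm_eq_abs, abs_of_nonneg (sf_nonneg a x τ hτ.1.le)]
  exact hM τ hτ

lemma sf_intervalIntegrable (a x t : ℝ) (hx : 0 < x) (ht : 0 < t) :
    IntervalIntegrable (sf a x) volume 0 t :=
  (intervalIntegrable_iff_integrableOn_Ioc_of_le ht.le).2 (sf_integrableOn a x t hx ht)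

lemma sf_continuousOn (a x : ℝ) : ContinuousOn (sf a x) (Ioi 0) := by
  intro τ hτ
  have hτ0 : (0:ℝ) < τ := hτ
  apply ContinuousAt.continuousWithinAt
  apply ContinuousAt.mul
  · exact Real.continuousAt_rpow_const τ a (Or.inl hτ0.ne')
  · apply Real.continuous_exp.continuousAt.comp
    apply ContinuousAt.sub continuous_neg.continuousAt
    exact (continuousAt_const.div (continuousAt_const.mul continuousAt_id)
      (by positivity))

lemma sf_hasDerivAt_x (a : ℝ) {τ : ℝ} (hτ : 0 < τ) (y : ℝ) :
    HasDerivAt (fun y => sf a y τ) (-(y/(2*τ)) * sf a y τ) y := by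
  have h1 : HasDerivAt (fun y : ℝ => -τ - y^2/(4*τ)) (-(2*y/(4*τ))) y := by
    simpa using ((hasDerivAt_pow 2 y).div_const (4*τ)).const_sub (-τ)
  have h2 := (h1.exp).const_mul (τ ^ a)
  refine h2.congr_deriv ?_
  unfold sf
  field_simp
  ring

lemma sf_hasDerivAt_tau (ν x : ℝ) {τ : ℝ} (hτ : 0 < τ) :
    HasDerivAt (fun τ => sf (-ν) x τ)
      (((x^2/4) * τ^(-(ν+2)) - τ^(-ν) - ν * τ^(-(ν+1))) * Real.exp (-τ - x^2/(4*τ))) τ := by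
  have h1 : HasDerivAt (fun τ : ℝ => τ^(-ν)) (-ν * τ^(-ν-1)) τ :=
    Real.hasDerivAt_rpow_const (Or.inl hτ.ne')
  have h2 : HasDerivAt (fun τ : ℝ => -τ - x^2/(4*τ)) (-1 - x^2/4 * (-(τ^2)⁻¹)) τ := by
    have hfun : (fun τ : ℝ => -τ - x^2/(4*τ)) = fun τ : ℝ => -τ - x^2/4 * τ⁻¹ := by
      funext s
      rw [div_mul_eq_div_div_swap, div_div]
      ring_nf
    rw [hfun]
    exact (hasDerivAt_id τ).neg.sub ((hasDerivAt_inv hτ.ne').const_mul (x^2/4))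
  have h3 := h1.mul h2.exp
  refine h3.congr_deriv ?_
  have e1 : τ^(-ν-1) = τ^(-(ν+1)) := by ring_nf
  have e2 : τ^(-(ν+2)) = τ^(-ν) * (τ^2)⁻¹ := by
    rw [show -(ν+2) = -ν + -2 by ring, Real.rpow_add hτ]
    congr 1
    rw [show (-2:ℝ) = ((-2:ℤ):ℝ) by norm_num, Real.rpow_intCast]
    simp only [zpow_neg]
    norm_cast
  rw [e1, e2]
  ring

lemma rpow_split (ν : ℝ) {τ : ℝ} (hτ : 0 < τ) : τ ^ (-(ν+2)) = τ⁻¹ * τ ^ (-(ν+1)) := by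
  rw [show -(ν+2) = (-1) + -(ν+1) by ring, Real.rpow_add hτ, Real.rpow_neg_one]

lemma I_hasDerivAt (ν x t : ℝ) (hx : 0 < x) (ht : 0 < t) :
    HasDerivAt (fun y => ∫ τ in Ioc (0:ℝ) t, sf (-(ν+1)) y τ)
      (∫ τ in Ioc (0:ℝ) t, -(x/(2*τ)) * sf (-(ν+1)) x τ) x := by
  set a := -(ν+1) with ha
  set μ := volume.restrict (Ioc (0:ℝ) t) with hμ
  have hx2 : (0:ℝ) < x/2 := by positivity
  have key := hasDerivAt_integral_of_dominated_loc_of_deriv_le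
    (μ := μ) (F := fun y τ => sf a y τ) (F' := fun y τ => -(y/(2*τ)) * sf a y τ)
    (x₀ := x) (bound := fun τ => (3*x/4) * (τ⁻¹ * sf a (x/2) τ)) (Metric.ball_mem_nhds x hx2)
    ?_ ?_ ?_ ?_ ?_ ?_
  · exact key.2
  · exact Eventually.of_forall fun y => (sf_meas a y).aestronglyMeasurable
  · exact sf_integrableOn a x t hx ht
  · exact (((measurable_const.div (measurable_const.mul measurable_id)).neg).mul
      (sf_meas a x)).aestronglyMeasurable
  · filter_upwards [ae_restrict_mem measurableSet_Ioc] with τ hτ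
    intro y hy
    have hτ0 : (0:ℝ) < τ := hτ.1
    rw [Metric.mem_ball, Real.dist_eq, abs_lt] at hy
    have hy1 : x/2 < y := by linarith
    have hy2 : y < 3*x/2 := by linarith
    rw [Real.norm_eq_abs, abs_mul, abs_neg, abs_of_nonneg (div_nonneg (by linarith) (by positivity)),
      abs_of_nonneg (sf_nonneg a y τ hτ0.le)]
    have hsf : sf a y τ ≤ sf a (x/2) τ := by
      unfold sf
      apply mul_le_mul_of_nonneg_left _ (by positivity)
      apply Real.exp_le_exp.2
      have hsq : (x/2)^2 ≤ y^2 := by nlinarith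
      have h4 : (x/2)^2/(4*τ) ≤ y^2/(4*τ) := by gcongr
      linarith
    have hco : y/(2*τ) ≤ (3*x/4) * τ⁻¹ := by
      rw [div_le_iff₀ (by positivity : (0:ℝ) < 2*τ)]
      have h5 : τ⁻¹ * τ = 1 := inv_mul_cancel₀ hτ0.ne'
      nlinarith
    calc y/(2*τ) * sf a y τ ≤ (3*x/4) * τ⁻¹ * sf a (x/2) τ :=
          mul_le_mul hco hsf (sf_nonneg a y τ hτ0.le) (by positivity)
      _ = (3*x/4) * (τ⁻¹ * sf a (x/2) τ) := by ring
  · have base := (sf_integrableOn (-(ν+2)) (x/2) t (by positivity) ht).const_mul (3*x/4)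
    apply base.congr
    filter_upwards [ae_restrict_mem measurableSet_Ioc] with τ hτ
    rw [ha]
    unfold sf
    rw [rpow_split ν hτ.1]
    ring
  · filter_upwards [ae_restrict_mem measurableSet_Ioc] with τ hτ
    intro y _
    exact sf_hasDerivAt_x a hτ.1 y

lemma sg_eq (ν x : ℝ) :
    (fun τ => ((x^2/4) * τ^(-(ν+2)) - τ^(-ν) - ν * τ^(-(ν+1))) * Real.exp (-τ - x^2/(4*τ)))
      = fun τ => (x^2/4) * sf (-(ν+2)) x τ - sf (-ν) x τ - ν * sf (-(ν+1)) x τ := by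
  funext τ; unfold sf; ring

lemma sg_integrableOn (ν x t : ℝ) (hx : 0 < x) (ht : 0 < t) :
    IntegrableOn (fun τ => ((x^2/4) * τ^(-(ν+2)) - τ^(-ν) - ν * τ^(-(ν+1))) *
      Real.exp (-τ - x^2/(4*τ))) (Ioc 0 t) := by
  rw [sg_eq]
  exact (((sf_integrableOn (-(ν+2)) x t hx ht).const_mul (x^2/4)).sub
    (sf_integrableOn (-ν) x t hx ht)).sub ((sf_integrableOn (-(ν+1)) x t hx ht).const_mul ν)

lemma key_integral (ν x t : ℝ) (hx : 0 < x) (ht : 0 < t) :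
    ∫ τ in Ioc (0:ℝ) t, ((x^2/4) * τ^(-(ν+2)) - τ^(-ν) - ν * τ^(-(ν+1))) *
        Real.exp (-τ - x^2/(4*τ)) = sf (-ν) x t := by
  set g : ℝ → ℝ := fun τ => ((x^2/4) * τ^(-(ν+2)) - τ^(-ν) - ν * τ^(-(ν+1))) *
    Real.exp (-τ - x^2/(4*τ)) with hg
  have hgint : IntegrableOn g (Ioc 0 t) := sg_integrableOn ν x t hx ht
  set G : ℝ → ℝ := fun u => ∫ τ in Ioc (0:ℝ) u, g τ with hG
  have hGcont : ContinuousOn G (Icc 0 t) := by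
    apply intervalIntegral.continuousOn_primitive
    rwa [integrableOn_Icc_iff_integrableOn_Ioc]
  have h1 : ∀ ε ∈ Ioo (0:ℝ) t, G t - G ε = sf (-ν) x t - sf (-ν) x ε := by
    intro ε hε
    have hsplit : G t = G ε + ∫ τ in Ioc ε t, g τ := by
      rw [hG]
      simp only
      rw [← Set.Ioc_union_Ioc_eq_Ioc hε.1.le hε.2.le,
        setIntegral_union (Set.Ioc_disjoint_Ioc_of_le le_rfl) measurableSet_Ioc
          (hgint.mono_set (Set.Ioc_subset_Ioc_right hε.2.le))
          (hgint.mono_set (Set.Ioc_subset_Ioc_left hε.1.le))]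
    have hftc : ∫ τ in Ioc ε t, g τ = sf (-ν) x t - sf (-ν) x ε := by
      rw [← intervalIntegral.integral_of_le hε.2.le]
      apply intervalIntegral.integral_eq_sub_of_hasDerivAt
      · intro τ hτ
        rw [uIcc_of_le hε.2.le] at hτ
        exact sf_hasDerivAt_tau ν x (lt_of_lt_of_le hε.1 hτ.1)
      · rw [intervalIntegrable_iff_integrableOn_Ioc_of_le hε.2.le]
        exact hgint.mono_set (Set.Ioc_subset_Ioc_left hε.1.le)
    rw [hsplit, hftc]; ring
  have hne : (𝓝[Ioo (0:ℝ) t] 0).NeBot := left_nhdsWithin_Ioo_neBot ht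
  have h2 : Tendsto (fun ε => G t - G ε) (𝓝[Ioo (0:ℝ) t] 0) (𝓝 (G t - 0)) := by
    apply Tendsto.const_sub
    have h0 : G 0 = 0 := by rw [hG]; simp
    have hc := hGcont 0 (Set.left_mem_Icc.2 ht.le)
    rw [ContinuousWithinAt, h0] at hc
    exact hc.mono_left (nhdsWithin_mono 0 Set.Ioo_subset_Icc_self)
  have h3 : Tendsto (fun ε => sf (-ν) x t - sf (-ν) x ε) (𝓝[Ioo (0:ℝ) t] 0)
      (𝓝 (sf (-ν) x t - 0)) := by
    apply Tendsto.const_sub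
    exact (sf_tendsto_zero (-ν) x hx).mono_left (nhdsWithin_mono 0 Set.Ioo_subset_Ioi_self)
  have heq : (fun ε => G t - G ε) =ᶠ[𝓝[Ioo (0:ℝ) t] 0]
      fun ε => sf (-ν) x t - sf (-ν) x ε := by
    filter_upwards [self_mem_nhdsWithin] with ε hε using h1 ε hε
  have hfin := tendsto_nhds_unique (h2.congr' heq) h3
  rw [sub_zero, sub_zero] at hfin
  exact hfin

lemma shu_eq (ν x t : ℝ) (ht : 0 ≤ t) :
    shu ν x t = (1/2) * (x/2)^ν * ∫ τ in Ioc (0:ℝ) t, sf (-(ν+1)) x τ := by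
  rw [shu, intervalIntegral.integral_of_le ht]
  rfl

theorem stmt_6 (ν x t : ℝ) (hx : 0 < x) (ht : 0 < t) :
    -2 * deriv (fun y => shu ν y t) x =
      deriv (fun s => shu (ν-1) x s) t + shu (ν-1) x t + shu (ν+1) x t := by
  have ht' : (0:ℝ) ≤ t := ht.le
  set I1 := ∫ τ in Ioc (0:ℝ) t, sf (-ν) x τ with hI1
  set I2 := ∫ τ in Ioc (0:ℝ) t, sf (-(ν+1)) x τ with hI2
  set I3 := ∫ τ in Ioc (0:ℝ) t, sf (-(ν+2)) x τ with hI3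
  have hs0 : shu (ν-1) x t = (1/2) * (x/2)^(ν-1) * I1 := by
    rw [shu_eq (ν-1) x t ht', hI1]
    congr 2
    rw [show -(ν-1+1) = -ν by ring]
  have hs1 : shu ν x t = (1/2) * (x/2)^ν * I2 := by
    rw [shu_eq ν x t ht', hI2]
  have hs2 : shu (ν+1) x t = (1/2) * (x/2)^(ν+1) * I3 := by
    rw [shu_eq (ν+1) x t ht', hI3]
    congr 2
    rw [show -(ν+1+1) = -(ν+2) by ring]
  -- t-derivative
  have hDt : deriv (fun s => shu (ν-1) x s) t = (1/2)*(x/2)^(ν-1) * sf (-ν) x t := by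
    have hfun : (fun s => shu (ν-1) x s)
        = fun s => (1/2)*(x/2)^(ν-1) * ∫ τ in (0:ℝ)..s, sf (-ν) x τ := by
      funext s
      rw [shu]
      congr 1
      apply intervalIntegral.integral_congr
      intro τ _
      unfold sf
      rw [show -(ν-1+1) = -ν by ring]
    rw [hfun]
    have hd : HasDerivAt (fun s => ∫ τ in (0:ℝ)..s, sf (-ν) x τ) (sf (-ν) x t) t := by
      apply intervalIntegral.integral_hasDerivAt_right
        (sf_intervalIntegrable (-ν) x t hx ht)
      · exact ((sf_meas (-ν) x).stronglyMeasurable).stronglyMeasurableAtFilter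
      · exact (sf_continuousOn (-ν) x).continuousAt (Ioi_mem_nhds ht)
    exact (hd.const_mul _).deriv
  -- x-derivative
  have hIconv : ∫ τ in Ioc (0:ℝ) t, -(x/(2*τ)) * sf (-(ν+1)) x τ = -(x/2) * I3 := by
    rw [hI3, ← integral_const_mul]
    apply setIntegral_congr_fun measurableSet_Ioc
    intro τ hτ
    unfold sf
    dsimp only
    rw [rpow_split ν hτ.1]
    have hτ' : τ ≠ 0 := hτ.1.ne'
    field_simp
  have hDx : deriv (fun y => shu ν y t) x
      = (1/2)*(ν*(x/2)^(ν-1)*(1/2)) * I2 + ((1/2)*(x/2)^ν) * (-(x/2) * I3) := by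
    have hfun : (fun y => shu ν y t)
        = fun y => ((1/2) * (y/2)^ν) * ∫ τ in Ioc (0:ℝ) t, sf (-(ν+1)) y τ := by
      funext y
      rw [shu_eq ν y t ht']
    rw [hfun]
    have hc : HasDerivAt (fun y : ℝ => (1/2) * (y/2)^ν) ((1/2)*(ν*(x/2)^(ν-1)*(1/2))) x := by
      apply HasDerivAt.const_mul
      have houter : HasDerivAt (fun z : ℝ => z^ν) (ν*(x/2)^(ν-1)) (x/2) :=
        Real.hasDerivAt_rpow_const (Or.inl (by positivity))
      exact houter.comp x ((hasDerivAt_id x).div_const 2)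
    have hI := I_hasDerivAt ν x t hx ht
    have hprod := hc.mul hI
    rw [hIconv, ← hI2] at hprod
    exact hprod.deriv
  -- FTC identity
  have hkey : (x^2/4) * I3 - I1 - ν * I2 = sf (-ν) x t := by
    have hA : IntegrableOn (fun τ => (x^2/4) * sf (-(ν+2)) x τ - sf (-ν) x τ) (Ioc 0 t) := by
      exact ((sf_integrableOn (-(ν+2)) x t hx ht).const_mul (x^2/4)).sub
        (sf_integrableOn (-ν) x t hx ht)
    have hB : IntegrableOn (fun τ => (x^2/4) * sf (-(ν+2)) x τ) (Ioc 0 t) := by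
      exact (sf_integrableOn (-(ν+2)) x t hx ht).const_mul (x^2/4)
    have hC : IntegrableOn (fun τ => ν * sf (-(ν+1)) x τ) (Ioc 0 t) := by
      exact (sf_integrableOn (-(ν+1)) x t hx ht).const_mul ν
    rw [← key_integral ν x t hx ht, sg_eq]
    rw [integral_sub hA hC, integral_sub hB (sf_integrableOn (-ν) x t hx ht),
      integral_const_mul, integral_const_mul]
  -- powers
  have hxq : (0:ℝ) < x/2 := by positivity
  have hp1 : (x/2)^ν = (x/2)^(ν-1) * (x/2) := by
    rw [← Real.rpow_add_one hxq.ne' (ν-1), sub_add_cancel]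
  have hp2 : (x/2)^(ν+1) = (x/2)^(ν-1) * (x/2)^2 := by
    rw [show ν+1 = (ν-1) + 2 by ring, Real.rpow_add hxq]
    congr 1
    rw [show (2:ℝ) = ((2:ℕ):ℝ) by norm_num, Real.rpow_natCast]
  rw [hDx, hDt, hs0, hs2, ← hkey, hp1, hp2]
  ring
end

section
/- For every real ν, every x > 0 and every t > 0, the Shu function satisfies the first differential relation -∂S_ν/∂x (x,t) - (ν/x)·S_ν(x,t) = S_{ν-1}(x,t) + ∂S_{ν-1}/∂t (x,t), where ∂S_ν/∂x denotes the partial derivative with respect to x and ∂S_{ν-1}/∂t the partial derivative with respect to t. -/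
open Real MeasureTheory

open Set Filter Topology intervalIntegral

/-- The integrand family. -/
noncomputable def shuF (μ c : ℝ) : ℝ → ℝ := fun τ => τ ^ μ * Real.exp (-τ - c / τ)

lemma shuF_contOn (μ c : ℝ) : ContinuousOn (shuF μ c) (Ioi 0) := by
  intro τ hτ
  apply ContinuousAt.continuousWithinAt
  have h1 : ContinuousAt (fun τ : ℝ => τ ^ μ) τ :=
    Real.continuousAt_rpow_const τ μ (Or.inl (ne_of_gt hτ))
  have h2 : ContinuousAt (fun τ : ℝ => Real.exp (-τ - c / τ)) τ :=
    Real.continuous_exp.continuousAt.comp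
      ((continuousAt_id.neg).sub (continuousAt_const.div continuousAt_id (ne_of_gt hτ)))
  exact h1.mul h2

lemma shuF_tendsto (μ c : ℝ) (hc : 0 < c) :
    Tendsto (shuF μ c) (𝓝[>] (0:ℝ)) (𝓝 0) := by
  have h1 : Tendsto (fun u : ℝ => u ^ (-μ) * Real.exp (-c * u)) atTop (𝓝 0) :=
    tendsto_rpow_mul_exp_neg_mul_atTop_nhds_zero (-μ) c hc
  have h3 : Tendsto (fun τ : ℝ => (τ⁻¹) ^ (-μ) * Real.exp (-c * τ⁻¹)) (𝓝[>] (0:ℝ)) (𝓝 0) :=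
    h1.comp tendsto_inv_nhdsGT_zero
  have h4 : Tendsto (fun τ : ℝ => Real.exp (-τ)) (𝓝[>] (0:ℝ)) (𝓝 1) := by
    have : Tendsto (fun τ : ℝ => Real.exp (-τ)) (𝓝 (0:ℝ)) (𝓝 1) := by
      have : ContinuousAt (fun τ : ℝ => Real.exp (-τ)) 0 :=
        (Real.continuous_exp.comp continuous_neg).continuousAt
      simpa [ContinuousAt] using this
    exact this.mono_left nhdsWithin_le_nhds
  have h5 := h3.mul h4
  rw [zero_mul] at h5
  refine h5.congr' ?_
  filter_upwards [self_mem_nhdsWithin] with τ (hτ : 0 < τ)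
  unfold shuF
  rw [Real.rpow_neg (inv_nonneg.mpr hτ.le), Real.inv_rpow hτ.le, inv_inv, mul_assoc,
    ← Real.exp_add]
  congr 2
  · field_simp
    ring

lemma shuF_intervalIntegrable (μ c t : ℝ) (hc : 0 < c) (ht : 0 < t) :
    IntervalIntegrable (shuF μ c) volume 0 t := by
  set g : ℝ → ℝ := fun τ => if τ ≤ 0 then 0 else shuF μ c τ with hgdef
  have hg_eq : ∀ τ ∈ Ioi (0:ℝ), g τ = shuF μ c τ := fun τ hτ => if_neg (not_le.mpr hτ)
  have hgc : ContinuousOn g (Icc 0 t) := by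
    intro τ0 hτ0
    rcases eq_or_lt_of_le hτ0.1 with h0 | h0
    · subst h0
      have key : Tendsto g (𝓝[>] (0:ℝ)) (𝓝 0) := by
        refine (shuF_tendsto μ c hc).congr' ?_
        filter_upwards [self_mem_nhdsWithin] with τ hτ
        exact (hg_eq τ hτ).symm
      have hsub : Icc (0:ℝ) t ⊆ {0} ∪ Ioi 0 := by
        intro y hy
        rcases eq_or_lt_of_le hy.1 with h | h
        · exact Or.inl (by simp [← h])
        · exact Or.inr h
      have h2 : Tendsto g (𝓝[Icc 0 t] (0:ℝ)) (𝓝 0) := by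
        refine Tendsto.mono_left ?_ (nhdsWithin_mono _ hsub)
        rw [nhdsWithin_union, nhdsWithin_singleton]
        refine tendsto_sup.mpr ⟨?_, key⟩
        have : g 0 = 0 := if_pos le_rfl
        simpa [this] using tendsto_pure_nhds g 0
      have hg0 : g 0 = 0 := if_pos le_rfl
      unfold ContinuousWithinAt
      rw [hg0]
      exact h2
    · have hCA : ContinuousAt g τ0 := by
        refine ((shuF_contOn μ c).continuousAt (Ioi_mem_nhds h0)).congr ?_
        filter_upwards [Ioi_mem_nhds h0] with τ hτ
        exact (hg_eq τ hτ).symm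
      exact hCA.continuousWithinAt
  have hgint : IntervalIntegrable g volume 0 t := by
    apply ContinuousOn.intervalIntegrable
    rwa [uIcc_of_le ht.le]
  rw [intervalIntegrable_iff] at hgint ⊢
  refine hgint.congr ?_
  rw [uIoc_of_le ht.le]
  exact (ae_restrict_iff' measurableSet_Ioc).mpr (ae_of_all _ fun τ hτ => hg_eq τ hτ.1)

lemma shuF_hasDerivAt_integral (μ c t : ℝ) (hc : 0 < c) (ht : 0 < t) :
    HasDerivAt (fun s => ∫ τ in (0:ℝ)..s, shuF μ c τ) (shuF μ c t) t :=
  integral_hasDerivAt_right (shuF_intervalIntegrable μ c t hc ht)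
    ((shuF_contOn μ c).stronglyMeasurableAtFilter isOpen_Ioi t ht)
    ((shuF_contOn μ c).continuousAt (Ioi_mem_nhds ht))

lemma rpow_split1 {τ : ℝ} (hτ : 0 < τ) (a : ℝ) : τ ^ (a - 1) = τ ^ a * τ⁻¹ := by
  rw [Real.rpow_sub hτ, Real.rpow_one, div_eq_mul_inv]

lemma rpow_split2 {τ : ℝ} (hτ : 0 < τ) (a : ℝ) : τ ^ (a - 2) = τ ^ a * (τ^2)⁻¹ := by
  rw [show (a-2) = a - ((2:ℕ):ℝ) by norm_num, Real.rpow_sub hτ, Real.rpow_natCast,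
    div_eq_mul_inv]

lemma shu_ibp (ν c t : ℝ) (hc : 0 < c) (ht : 0 < t) :
    shuF (-ν) c t =
      (-ν) * (∫ τ in (0:ℝ)..t, shuF (-(ν+1)) c τ)
      + (-1) * (∫ τ in (0:ℝ)..t, shuF (-ν) c τ)
      + c * (∫ τ in (0:ℝ)..t, shuF (-(ν+2)) c τ) := by
  set G' : ℝ → ℝ := fun τ =>
    (-ν * τ ^ (-ν-1)) * Real.exp (-τ - c/τ)
    + τ ^ (-ν) * (Real.exp (-τ - c/τ) * (-1 - (0*τ - c*1)/τ^2)) with hG'def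
  have key : ∀ τ : ℝ, 0 < τ →
      (-ν) * shuF (-(ν+1)) c τ + (-1) * shuF (-ν) c τ + c * shuF (-(ν+2)) c τ = G' τ := by
    intro τ hτ
    have h1 : τ ^ (-(ν+1)) = τ ^ (-ν) * τ⁻¹ := by
      rw [show -(ν+1) = -ν - 1 by ring]; exact rpow_split1 hτ (-ν)
    have h1' : τ ^ (-ν-1) = τ ^ (-ν) * τ⁻¹ := rpow_split1 hτ (-ν)
    have h2 : τ ^ (-(ν+2)) = τ ^ (-ν) * (τ^2)⁻¹ := by
      rw [show -(ν+2) = -ν - 2 by ring]; exact rpow_split2 hτ (-ν)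
    simp only [shuF, hG'def, h1, h1', h2]
    have hτ2 : (τ:ℝ)^2 ≠ 0 := pow_ne_zero 2 hτ.ne'
    field_simp
    ring
  have hderiv : ∀ τ ∈ Ioo (0:ℝ) t, HasDerivAt (shuF (-ν) c) (G' τ) τ := by
    intro τ hτ
    have h1 : HasDerivAt (fun τ : ℝ => τ ^ (-ν)) (-ν * τ ^ (-ν-1)) τ :=
      Real.hasDerivAt_rpow_const (Or.inl hτ.1.ne')
    have hb : HasDerivAt (fun τ : ℝ => c/τ) ((0*τ - c*1)/τ^2) τ :=
      (hasDerivAt_const τ c).div (hasDerivAt_id τ) hτ.1.ne'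
    have hin : HasDerivAt (fun τ : ℝ => -τ - c/τ) (-1 - (0*τ - c*1)/τ^2) τ :=
      ((hasDerivAt_id τ).neg).sub hb
    exact h1.mul hin.exp
  have hint : IntervalIntegrable G' volume 0 t := by
    have base := (((shuF_intervalIntegrable (-(ν+1)) c t hc ht).const_mul (-ν)).add
      ((shuF_intervalIntegrable (-ν) c t hc ht).const_mul (-1))).add
      ((shuF_intervalIntegrable (-(ν+2)) c t hc ht).const_mul c)
    rw [intervalIntegrable_iff] at base ⊢
    refine base.congr ?_
    rw [uIoc_of_le ht.le]
    exact (ae_restrict_iff' measurableSet_Ioc).mpr (ae_of_all _ fun τ hτ => key τ hτ.1)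
  have hb : Tendsto (shuF (-ν) c) (𝓝[<] t) (𝓝 (shuF (-ν) c t)) :=
    (((shuF_contOn (-ν) c).continuousAt (Ioi_mem_nhds ht)).tendsto).mono_left nhdsWithin_le_nhds
  have heq := integral_eq_sub_of_hasDerivAt_of_tendsto ht hderiv hint
    (shuF_tendsto (-ν) c hc) hb
  have hcongr : (∫ τ in (0:ℝ)..t, G' τ) =
      ∫ τ in (0:ℝ)..t, ((-ν) * shuF (-(ν+1)) c τ + (-1) * shuF (-ν) c τ
        + c * shuF (-(ν+2)) c τ) := by
    refine integral_congr_ae (ae_of_all _ fun τ hτ => ?_)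
    rw [uIoc_of_le ht.le] at hτ
    exact (key τ hτ.1).symm
  rw [hcongr] at heq
  rw [integral_add (((shuF_intervalIntegrable (-(ν+1)) c t hc ht).const_mul (-ν)).add
      ((shuF_intervalIntegrable (-ν) c t hc ht).const_mul (-1)))
      ((shuF_intervalIntegrable (-(ν+2)) c t hc ht).const_mul c),
    integral_add ((shuF_intervalIntegrable (-(ν+1)) c t hc ht).const_mul (-ν))
      ((shuF_intervalIntegrable (-ν) c t hc ht).const_mul (-1)),
    intervalIntegral.integral_const_mul, intervalIntegral.integral_const_mul, intervalIntegral.integral_const_mul] at heq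
  rw [heq]; ring

lemma hasDerivAt_integral_x (ν x t : ℝ) (hx : 0 < x) (ht : 0 < t) :
    HasDerivAt (fun y => ∫ τ in (0:ℝ)..t, τ ^ (-(ν+1)) * Real.exp (-τ - y^2/(4*τ)))
      (-(x/2) * ∫ τ in (0:ℝ)..t, shuF (-(ν+2)) (x^2/4) τ) x := by
  set F : ℝ → ℝ → ℝ := fun y τ => τ ^ (-(ν+1)) * Real.exp (-τ - y^2/(4*τ)) with hFdef
  set F' : ℝ → ℝ → ℝ :=
    fun y τ => τ ^ (-(ν+1)) * (Real.exp (-τ - y^2/(4*τ)) * (-((2*y)/(4*τ)))) with hF'def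
  have hFeq : ∀ y, F y = shuF (-(ν+1)) (y^2/4) := by
    intro y; funext τ; simp only [hFdef, shuF, div_div]
  have hmeasF : ∀ y : ℝ, AEStronglyMeasurable (F y) (volume.restrict (Set.uIoc (0:ℝ) t)) := by
    intro y
    rw [uIoc_of_le ht.le, hFeq y]
    exact ((shuF_contOn (-(ν+1)) (y^2/4)).mono Ioc_subset_Ioi_self).aestronglyMeasurable
      measurableSet_Ioc
  have hF'cont : ContinuousOn (F' x) (Ioc 0 t) := by
    intro τ hτ
    apply ContinuousAt.continuousWithinAt
    have h1 : ContinuousAt (fun τ : ℝ => τ ^ (-(ν+1))) τ :=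
      Real.continuousAt_rpow_const τ _ (Or.inl hτ.1.ne')
    have h2 : ContinuousAt (fun τ : ℝ => Real.exp (-τ - x^2/(4*τ))) τ :=
      Real.continuous_exp.continuousAt.comp ((continuousAt_id.neg).sub
        (continuousAt_const.div (continuousAt_const.mul continuousAt_id)
          (by simp [hτ.1.ne'])))
    have h3 : ContinuousAt (fun τ : ℝ => -((2*x)/(4*τ))) τ :=
      (continuousAt_const.div (continuousAt_const.mul continuousAt_id)
        (by simp [hτ.1.ne'])).neg
    exact h1.mul (h2.mul h3)
  have hmeasF' : AEStronglyMeasurable (F' x) (volume.restrict (Set.uIoc (0:ℝ) t)) := by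
    rw [uIoc_of_le ht.le]
    exact hF'cont.aestronglyMeasurable measurableSet_Ioc
  have hFint : IntervalIntegrable (F x) volume 0 t := by
    rw [hFeq x]
    exact shuF_intervalIntegrable _ _ t (by positivity) ht
  set bound : ℝ → ℝ := fun τ => (3*x/4) * shuF (-(ν+2)) (x^2/16) τ with hbdef
  have hboundint : IntervalIntegrable bound volume 0 t :=
    (shuF_intervalIntegrable (-(ν+2)) (x^2/16) t (by positivity) ht).const_mul _
  have h_bound : ∀ᵐ τ ∂volume, τ ∈ Set.uIoc (0:ℝ) t →
      ∀ y ∈ Metric.ball x (x/2), ‖F' y τ‖ ≤ bound τ := by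
    refine ae_of_all _ fun τ hτ y hy => ?_
    rw [uIoc_of_le ht.le] at hτ
    have hτ0 : 0 < τ := hτ.1
    rw [Real.ball_eq_Ioo] at hy
    have hy1 : x/2 < y := by linarith [hy.1]
    have hy2 : y < 3*x/2 := by linarith [hy.2]
    have hy0 : 0 < y := lt_trans (by positivity) hy1
    have hrp : (0:ℝ) < τ ^ (-(ν+1)) := Real.rpow_pos_of_pos hτ0 _
    have habs : ‖F' y τ‖ = τ ^ (-(ν+1)) * (Real.exp (-τ - y^2/(4*τ)) * ((2*y)/(4*τ))) := by
      simp only [hF'def, Real.norm_eq_abs, abs_mul, abs_neg]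
      rw [abs_of_pos hrp, abs_of_pos (Real.exp_pos _), abs_of_pos (by positivity)]
    rw [habs, hbdef]
    have hexp : Real.exp (-τ - y^2/(4*τ)) ≤ Real.exp (-τ - (x^2/16)/τ) := by
      apply Real.exp_le_exp.mpr
      have : x^2/16/τ ≤ y^2/(4*τ) := by
        have hsq : x/2 * (x/2) < y * y := mul_self_lt_mul_self (by positivity) hy1
        rw [div_le_div_iff₀ (by positivity) (by positivity)]
        nlinarith
      linarith
    have hfac : (2*y)/(4*τ) ≤ (3*x/4) * τ⁻¹ := by
      rw [div_le_iff₀ (by positivity)]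
      field_simp
      nlinarith
    have hsplit : shuF (-(ν+2)) (x^2/16) τ = τ ^ (-(ν+1)) * τ⁻¹ * Real.exp (-τ - (x^2/16)/τ) := by
      simp only [shuF]
      rw [show -(ν+2) = -(ν+1) - 1 by ring, rpow_split1 hτ0]
    beta_reduce
    rw [hsplit]
    calc τ ^ (-(ν+1)) * (Real.exp (-τ - y^2/(4*τ)) * ((2*y)/(4*τ)))
        ≤ τ ^ (-(ν+1)) * (Real.exp (-τ - (x^2/16)/τ) * ((3*x/4) * τ⁻¹)) := by
          apply mul_le_mul_of_nonneg_left _ hrp.le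
          exact mul_le_mul hexp hfac (by positivity) (Real.exp_pos _).le
      _ = 3*x/4 * (τ ^ (-(ν+1)) * τ⁻¹ * Real.exp (-τ - (x^2/16)/τ)) := by ring
  have h_diff : ∀ᵐ τ ∂volume, τ ∈ Set.uIoc (0:ℝ) t →
      ∀ y ∈ Metric.ball x (x/2), HasDerivAt (fun y => F y τ) (F' y τ) y := by
    refine ae_of_all _ fun τ hτ y _ => ?_
    have hy2 : HasDerivAt (fun y : ℝ => y^2) (2*y) y := by
      simpa using hasDerivAt_pow 2 y
    have hin : HasDerivAt (fun y : ℝ => -τ - y^2/(4*τ)) (-((2*y)/(4*τ))) y :=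
      HasDerivAt.const_sub _ (hy2.div_const _)
    exact hin.exp.const_mul _
  have main := hasDerivAt_integral_of_dominated_loc_of_deriv_le (F := F) (F' := F')
    (bound := bound) (a := (0:ℝ)) (b := t) (Metric.ball_mem_nhds x (half_pos hx))
    (Filter.Eventually.of_forall hmeasF) hFint hmeasF' h_bound hboundint h_diff
  have hval : (∫ τ in (0:ℝ)..t, F' x τ) = -(x/2) * ∫ τ in (0:ℝ)..t, shuF (-(ν+2)) (x^2/4) τ := by
    rw [← intervalIntegral.integral_const_mul]
    refine integral_congr_ae (ae_of_all _ fun τ hτ => ?_)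
    rw [uIoc_of_le ht.le] at hτ
    have hτ0 : 0 < τ := hτ.1
    simp only [hF'def, shuF]
    rw [show -(ν+2) = -(ν+1) - 1 by ring, rpow_split1 hτ0, div_div]
    field_simp
    ring
  rw [← hval]
  exact main.2

theorem stmt_7 (ν x t : ℝ) (hx : 0 < x) (ht : 0 < t) :
    -deriv (fun y => shu ν y t) x - (ν/x) * shu ν x t =
      shu (ν-1) x t + deriv (fun s => shu (ν-1) x s) t := by
  have hc : (0:ℝ) < x^2/4 := by positivity
  have hJ1 : (∫ τ in (0:ℝ)..t, τ ^ (-(ν+1)) * Real.exp (-τ - x^2/(4*τ)))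
      = ∫ τ in (0:ℝ)..t, shuF (-(ν+1)) (x^2/4) τ := by
    refine integral_congr fun τ _ => ?_
    simp [shuF, div_div]
  have hfunT : (fun s => shu (ν-1) x s)
      = fun s => 1/2*(x/2)^(ν-1) * ∫ τ in (0:ℝ)..s, shuF (-ν) (x^2/4) τ := by
    funext s
    simp only [shu, shuF, div_div, show -(ν-1+1) = -ν by ring]
  have hT : deriv (fun s => shu (ν-1) x s) t
      = 1/2*(x/2)^(ν-1) * shuF (-ν) (x^2/4) t := by
    rw [hfunT]
    exact (((shuF_hasDerivAt_integral (-ν) (x^2/4) t hc ht)).const_mul (1/2*(x/2)^(ν-1))).deriv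
  have hX : deriv (fun y => shu ν y t) x
      = 1/2*(ν*(x/2)^(ν-1)*(1/2)) * (∫ τ in (0:ℝ)..t, shuF (-(ν+1)) (x^2/4) τ)
        + 1/2*(x/2)^ν * (-(x/2) * ∫ τ in (0:ℝ)..t, shuF (-(ν+2)) (x^2/4) τ) := by
    have h2 : HasDerivAt (fun y : ℝ => y/2) (1/2) x := (hasDerivAt_id x).div_const 2
    have hrp : HasDerivAt (fun z : ℝ => z ^ ν) (ν * (x/2)^(ν-1)) (x/2) :=
      Real.hasDerivAt_rpow_const (Or.inl (by positivity))
    have hP : HasDerivAt (fun y : ℝ => 1/2*(y/2:ℝ)^ν) (1/2*(ν*(x/2)^(ν-1)*(1/2))) x := by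
      exact ((hrp.comp x h2)).const_mul (1/2)
    have hI := hasDerivAt_integral_x ν x t hx ht
    have hD : HasDerivAt (fun y => 1/2*(y/2:ℝ)^ν * ∫ τ in (0:ℝ)..t, τ ^ (-(ν+1)) * Real.exp (-τ - y^2/(4*τ))) _ x := hP.mul hI
    have hfunX : (fun y => shu ν y t)
        = fun y => 1/2*(y/2:ℝ)^ν
            * ∫ τ in (0:ℝ)..t, τ ^ (-(ν+1)) * Real.exp (-τ - y^2/(4*τ)) := rfl
    rw [hfunX, hD.deriv, hJ1]
  have hshu : shu ν x t = 1/2*(x/2)^ν * ∫ τ in (0:ℝ)..t, shuF (-(ν+1)) (x^2/4) τ := by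
    rw [shu, hJ1]
  have hshu' : shu (ν-1) x t = 1/2*(x/2)^(ν-1) * ∫ τ in (0:ℝ)..t, shuF (-ν) (x^2/4) τ :=
    congrFun hfunT t
  have hPsplit : (x/2:ℝ)^ν = (x/2)^(ν-1) * (x/2) := by
    have h := Real.rpow_add (show (0:ℝ) < x/2 by positivity) (ν-1) 1
    rw [show ν-1+1 = ν by ring, Real.rpow_one] at h
    exact h
  rw [hX, hT, hshu, hshu', shu_ibp ν (x^2/4) t hc ht, hPsplit]
  field_simp
  ring
end

section
/- For every real ν, every x > 0 and every t > 0, the Shu function satisfies the second differential relation -∂S_ν/∂x (x,t) + (ν/x)·S_ν(x,t) = S_{ν+1}(x,t), where ∂S_ν/∂x denotes the partial derivative with respect to x. -/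
open Real MeasureTheory

/-- Boundedness of `τ^s e^{-c/τ}` on `(0,t]`. -/
lemma shu_aux_bdd (s c t : ℝ) (hc : 0 < c) :
    ∃ C : ℝ, ∀ τ ∈ Set.Ioc (0:ℝ) t, τ ^ s * Real.exp (-(c/τ)) ≤ C := by
  set n : ℕ := ⌈-s⌉₊ with hn
  refine ⟨(Nat.factorial n : ℝ)/c^n * max 1 (t ^ (s + n)), ?_⟩
  rintro τ ⟨hτ0, hτt⟩
  have hcτ : 0 < c / τ := div_pos hc hτ0
  have h1 : Real.exp (-(c/τ)) ≤ (Nat.factorial n : ℝ) * (τ/c)^n := by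
    rw [Real.exp_neg]
    rw [inv_le_comm₀ (Real.exp_pos _) (by positivity)]
    calc ((Nat.factorial n : ℝ) * (τ/c)^n)⁻¹ = (c/τ)^n / Nat.factorial n := by
          rw [mul_inv, ← inv_pow, inv_div]; ring
      _ ≤ Real.exp (c/τ) := Real.pow_div_factorial_le_exp (x := c/τ) hcτ.le n
  have h2 : τ ^ s * Real.exp (-(c/τ)) ≤ (Nat.factorial n : ℝ)/c^n * τ ^ (s + n) := by
    calc τ ^ s * Real.exp (-(c/τ)) ≤ τ ^ s * ((Nat.factorial n : ℝ) * (τ/c)^n) :=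
          mul_le_mul_of_nonneg_left h1 (Real.rpow_nonneg hτ0.le s)
      _ = (Nat.factorial n : ℝ)/c^n * (τ ^ s * τ ^ (n:ℝ)) := by
          rw [Real.rpow_natCast, div_pow]; ring
      _ = (Nat.factorial n : ℝ)/c^n * τ ^ (s + n) := by rw [← Real.rpow_add hτ0]
  refine h2.trans (mul_le_mul_of_nonneg_left ?_ (by positivity))
  have hsn : 0 ≤ s + n := by
    have := Nat.le_ceil (-s)
    push_cast at this ⊢
    linarith
  rcases le_or_gt τ 1 with h | h
  · exact le_max_of_le_left (Real.rpow_le_one hτ0.le h hsn)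
  · exact le_max_of_le_right (Real.rpow_le_rpow hτ0.le hτt hsn)

theorem stmt_9 (ν x t : ℝ) (hx : 0 < x) (ht : 0 < t) :
    -deriv (fun y => shu ν y t) x + (ν/x) * shu ν x t = shu (ν+1) x t := by
  set μ := volume.restrict (Set.Ioc (0:ℝ) t) with hμ
  set F : ℝ → ℝ → ℝ := fun y τ => τ ^ (-(ν+1)) * Real.exp (-τ - y^2 / (4*τ)) with hF
  set F' : ℝ → ℝ → ℝ := fun y τ => -(y/(2*τ)) * (τ ^ (-(ν+1)) * Real.exp (-τ - y^2 / (4*τ)))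
    with hF'
  have hμfin : volume (Set.Ioc (0:ℝ) t) < ⊤ := measure_Ioc_lt_top
  -- continuity of the integrands on (0, t]
  have hcont : ∀ y : ℝ, ContinuousOn (F y) (Set.Ioc (0:ℝ) t) := by
    intro y
    refine ContinuousOn.mul ?_ ?_
    · exact fun τ hτ => (Real.continuousAt_rpow_const τ _ (Or.inl hτ.1.ne')).continuousWithinAt
    · refine Real.continuous_exp.comp_continuousOn ?_
      refine ContinuousOn.sub continuous_neg.continuousOn ?_
      exact continuousOn_const.div (continuous_const.mul continuous_id).continuousOn
        (fun τ hτ => by have := hτ.1; positivity)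
  have hcont' : ∀ y : ℝ, ContinuousOn (F' y) (Set.Ioc (0:ℝ) t) := by
    intro y
    refine ContinuousOn.mul ?_ (hcont y)
    exact (continuousOn_const.div (continuous_const.mul continuous_id).continuousOn
      (fun τ hτ => mul_ne_zero two_ne_zero hτ.1.ne')).neg
  have hmeas : ∀ y : ℝ, AEStronglyMeasurable (F y) μ :=
    fun y => (hcont y).aestronglyMeasurable measurableSet_Ioc
  have hmeas' : AEStronglyMeasurable (F' x) μ :=
    (hcont' x).aestronglyMeasurable measurableSet_Ioc
  -- integrability of F x
  have hFint : Integrable (F x) μ := by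
    obtain ⟨C, hC⟩ := shu_aux_bdd (-(ν+1)) (x^2/4) t (by positivity)
    refine ⟨hmeas x, HasFiniteIntegral.restrict_of_bounded (C := C) hμfin ?_⟩
    rw [ae_restrict_iff' measurableSet_Ioc]
    filter_upwards with τ hτ
    have hτ0 : 0 < τ := hτ.1
    have hexp : Real.exp (-τ - x^2/(4*τ)) ≤ Real.exp (-(x^2/4/τ)) := by
      apply Real.exp_le_exp.2
      rw [div_div]
      have : 0 ≤ τ := hτ0.le
      linarith
    have : ‖F x τ‖ = τ ^ (-(ν+1)) * Real.exp (-τ - x^2/(4*τ)) := by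
      rw [hF, Real.norm_eq_abs, abs_of_nonneg (by positivity)]
    rw [this]
    exact (mul_le_mul_of_nonneg_left hexp (by positivity)).trans (hC τ hτ)
  -- the bound for the derivative on the ball
  obtain ⟨C, hC⟩ := shu_aux_bdd (-(ν+2)) (x^2/16) t (by positivity)
  set bound : ℝ → ℝ := fun τ => (3*x/4) * (τ ^ (-(ν+2)) * Real.exp (-(x^2/16/τ))) with hbd
  have hbound_int : Integrable bound μ := by
    refine ⟨?_, HasFiniteIntegral.restrict_of_bounded (C := |3*x/4| * |C|) hμfin ?_⟩
    · refine (ContinuousOn.aestronglyMeasurable ?_ measurableSet_Ioc)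
      refine continuousOn_const.mul (ContinuousOn.mul ?_ ?_)
      · exact fun τ hτ => (Real.continuousAt_rpow_const τ _ (Or.inl hτ.1.ne')).continuousWithinAt
      · refine Real.continuous_exp.comp_continuousOn ?_
        exact (continuousOn_const.div continuous_id.continuousOn (fun τ hτ => hτ.1.ne')).neg
    · rw [ae_restrict_iff' measurableSet_Ioc]
      filter_upwards with τ hτ
      have h1 : τ ^ (-(ν+2)) * Real.exp (-(x^2/16/τ)) ≤ C := hC τ hτ
      have h0 : 0 ≤ τ ^ (-(ν+2)) * Real.exp (-(x^2/16/τ)) := by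
        have := hτ.1; positivity
      rw [hbd, norm_mul, Real.norm_eq_abs, Real.norm_eq_abs, abs_of_nonneg h0]
      exact mul_le_mul_of_nonneg_left (h1.trans (le_abs_self C)) (abs_nonneg _)
  have hball : ∀ y ∈ Metric.ball x (x/2), x/2 < y ∧ y < 3*x/2 := by
    intro y hy
    rw [Metric.mem_ball, Real.dist_eq, abs_lt] at hy
    constructor <;> linarith [hy.1, hy.2]
  have h_bound : ∀ᵐ τ ∂μ, ∀ y ∈ Metric.ball x (x/2), ‖F' y τ‖ ≤ bound τ := by
    rw [ae_restrict_iff' measurableSet_Ioc]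
    filter_upwards with τ hτ
    intro y hy
    obtain ⟨hy1, hy2⟩ := hball y hy
    have hτ0 : 0 < τ := hτ.1
    have hy0 : 0 < y := lt_trans (by positivity) hy1
    have hnorm : ‖F' y τ‖ = y/(2*τ) * (τ ^ (-(ν+1)) * Real.exp (-τ - y^2/(4*τ))) := by
      rw [hF', Real.norm_eq_abs, abs_mul, abs_neg, abs_of_nonneg (by positivity),
        abs_of_nonneg (by positivity)]
    rw [hnorm, hbd]
    have hexp : Real.exp (-τ - y^2/(4*τ)) ≤ Real.exp (-(x^2/16/τ)) := by
      apply Real.exp_le_exp.2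
      have hsq : x^2/4 ≤ y^2 := by nlinarith
      rw [div_div]
      have h4 : x^2/(16*τ) ≤ y^2/(4*τ) := by
        rw [div_le_div_iff₀ (by positivity) (by positivity)]
        nlinarith
      linarith
    have hcoef : y/(2*τ) ≤ (3*x/4) * τ⁻¹ := by
      rw [div_le_iff₀ (by positivity)]
      have : (3*x/4) * τ⁻¹ * (2*τ) = 3*x/2 := by field_simp; ring
      rw [this]
      linarith
    calc y/(2*τ) * (τ ^ (-(ν+1)) * Real.exp (-τ - y^2/(4*τ)))
        ≤ (3*x/4) * τ⁻¹ * (τ ^ (-(ν+1)) * Real.exp (-(x^2/16/τ))) := by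
          apply mul_le_mul hcoef (mul_le_mul_of_nonneg_left hexp (by positivity))
            (by positivity) (by positivity)
      _ = (3*x/4) * (τ ^ (-(ν+2)) * Real.exp (-(x^2/16/τ))) := by
          have h5 : τ⁻¹ * τ ^ (-(ν+1)) = τ ^ (-(ν+2)) := by
            rw [← Real.rpow_neg_one τ, ← Real.rpow_add hτ0]
            congr 1; ring
          rw [← h5]; ring
  have h_diff : ∀ᵐ τ ∂μ, ∀ y ∈ Metric.ball x (x/2), HasDerivAt (fun y => F y τ) (F' y τ) y := by
    rw [ae_restrict_iff' measurableSet_Ioc]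
    filter_upwards with τ hτ
    intro y hy
    have hτ0 : 0 < τ := hτ.1
    have h1 : HasDerivAt (fun y : ℝ => -τ - y^2/(4*τ)) (-(2*y/(4*τ))) y := by
      have := ((hasDerivAt_pow 2 y).div_const (4*τ)).const_sub (-τ)
      simpa using this
    have h2 := ((h1.exp).const_mul (τ ^ (-(ν+1)))) 
    refine h2.congr_deriv ?_
    rw [hF']
    field_simp
    ring
  have key := hasDerivAt_integral_of_dominated_loc_of_deriv_le (μ := μ)
    (F := F) (F' := F') (x₀ := x) (bound := bound) (Metric.ball_mem_nhds x (half_pos hx))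
    (Filter.Eventually.of_forall hmeas) hFint hmeas' h_bound hbound_int h_diff
  obtain ⟨hF'int, hderivI⟩ := key
  -- express shu via the set integral
  have hshu_eq : (fun y => shu ν y t) = fun y => (1/2) * (y/2) ^ ν * ∫ τ, F y τ ∂μ := by
    funext y
    rw [shu, intervalIntegral.integral_of_le ht.le]
  -- derivative of the power prefactor
  have hpow : HasDerivAt (fun y : ℝ => (1/2) * (y/2) ^ ν)
      ((1/2) * (ν * (x/2) ^ (ν-1) * (1/2))) x := by
    have h1 : HasDerivAt (fun y : ℝ => y/2) (1/2) x := by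
      simpa using (hasDerivAt_id x).div_const 2
    have h2 := (Real.hasDerivAt_rpow_const (x := x/2) (p := ν)
      (Or.inl (by positivity))).comp x h1
    have h3 := h2.const_mul (1/2 : ℝ)
    exact h3
  have hD := hpow.mul hderivI
  have hderiv_val : deriv (fun y => shu ν y t) x
      = (1/2) * (ν * (x/2) ^ (ν-1) * (1/2)) * (∫ τ, F x τ ∂μ)
        + (1/2) * (x/2) ^ ν * (∫ τ, F' x τ ∂μ) := by
    rw [hshu_eq]
    exact hD.deriv
  set I : ℝ := ∫ τ, F x τ ∂μ with hI
  set K : ℝ := ∫ τ, τ ^ (-(ν+1+1)) * Real.exp (-τ - x^2/(4*τ)) ∂μ with hK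
  have hJ : (∫ τ, F' x τ ∂μ) = -(x/2) * K := by
    rw [hK, ← integral_const_mul]
    refine setIntegral_congr_fun measurableSet_Ioc ?_
    intro τ hτ
    have hτ0 : 0 < τ := hτ.1
    have hsplit : τ ^ (-(ν+1+1)) = τ⁻¹ * τ ^ (-(ν+1)) := by
      rw [← Real.rpow_neg_one τ, ← Real.rpow_add hτ0]
      congr 1; ring
    show -(x / (2 * τ)) * (τ ^ (-(ν+1)) * Real.exp (-τ - x^2/(4*τ)))
        = -(x/2) * (τ ^ (-(ν+1+1)) * Real.exp (-τ - x^2/(4*τ)))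
    rw [hsplit]
    field_simp
  have hxpow : (x/2:ℝ) ^ ν = (x/2) ^ (ν-1) * (x/2) := by
    rw [← Real.rpow_add_one (by positivity : (x/2:ℝ) ≠ 0) (ν-1)]
    norm_num
  have hxpow1 : (x/2:ℝ) ^ (ν+1) = (x/2) ^ (ν-1) * (x/2) * (x/2) := by
    rw [Real.rpow_add_one (by positivity : (x/2:ℝ) ≠ 0) ν, hxpow]
  have hshu1 : shu (ν+1) x t = (1/2) * (x/2) ^ (ν+1) * K := by
    rw [shu, intervalIntegral.integral_of_le ht.le, hK]
  have hshu0 : shu ν x t = (1/2) * (x/2) ^ ν * I := by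
    rw [shu, intervalIntegral.integral_of_le ht.le, hI]
  rw [hderiv_val, hJ, hshu0, hshu1, hxpow, hxpow1]
  field_simp
  ring
end

section
/- For every real ν, every natural number k, every x > 0 and every t > 0, the k-th iterate of the operator (1/x)·d/dx applied in the variable x to the function x ↦ S_ν(x,t)/x^ν equals (-1)^k · S_{ν+k}(x,t)/x^{ν+k}. -/
open Real MeasureTheory Set Metric intervalIntegral

noncomputable def gI (s t x : ℝ) : ℝ :=
  ∫ τ in (0:ℝ)..t, τ ^ (-(s+1)) * Real.exp (-τ - x^2 / (4*τ))

-- bound: τ^(-r) * exp(-(c/τ)) ≤ n! / c^n * t^(n - r) for n = ⌈r⌉₊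
lemma bound_aux (r c t : ℝ) (hc : 0 < c) {τ : ℝ} (hτ : 0 < τ) (hτt : τ ≤ t) :
    τ ^ (-r) * Real.exp (-(c/τ)) ≤
      ((Nat.ceil r).factorial : ℝ) / c ^ (Nat.ceil r) * t ^ ((Nat.ceil r : ℝ) - r) := by
  set n := Nat.ceil r with hn
  have hct : 0 < c / τ := by positivity
  have h1 : (c/τ) ^ n / (n).factorial ≤ Real.exp (c/τ) :=
    Real.pow_div_factorial_le_exp _ hct.le n
  have h2 : Real.exp (-(c/τ)) ≤ (n).factorial * τ ^ n / c ^ n := by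
    rw [Real.exp_neg]
    rw [inv_le_comm₀ (Real.exp_pos _) (by positivity)]
    calc ((n).factorial * τ ^ n / c ^ n)⁻¹ = (c/τ) ^ n / (n).factorial := by
          rw [div_pow]; field_simp
      _ ≤ Real.exp (c/τ) := h1
  have h3 : τ ^ (-r) * Real.exp (-(c/τ)) ≤ τ ^ (-r) * ((n).factorial * τ ^ n / c ^ n) := by
    apply mul_le_mul_of_nonneg_left h2 (by positivity)
  refine h3.trans ?_
  have hτn : τ ^ (-r) * τ ^ n = τ ^ ((n:ℝ) - r) := by
    rw [← Real.rpow_natCast τ n, ← Real.rpow_add hτ]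
    ring_nf
  have hrn : (0:ℝ) ≤ (n:ℝ) - r := sub_nonneg.2 (Nat.le_ceil r)
  calc τ ^ (-r) * ((n).factorial * τ ^ n / c ^ n)
      = ((n).factorial : ℝ) / c ^ n * (τ ^ (-r) * τ ^ n) := by ring
    _ = ((n).factorial : ℝ) / c ^ n * τ ^ ((n:ℝ) - r) := by rw [hτn]
    _ ≤ ((n).factorial : ℝ) / c ^ n * t ^ ((n:ℝ) - r) := by
        apply mul_le_mul_of_nonneg_left (Real.rpow_le_rpow hτ.le hτt hrn) (by positivity)

lemma cont_rpow (s t : ℝ) : ContinuousOn (fun τ : ℝ => τ ^ (-(s+1))) (Ioc 0 t) :=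
  fun τ hτ => (Real.continuousAt_rpow_const τ _ (Or.inl (ne_of_gt hτ.1))).continuousWithinAt

lemma cont_exp (y t : ℝ) :
    ContinuousOn (fun τ => Real.exp (-τ - y^2 / (4*τ))) (Ioc 0 t) := by
  apply Real.continuous_exp.comp_continuousOn
  apply ContinuousOn.sub continuousOn_neg
  apply ContinuousOn.div continuousOn_const (continuous_const.mul continuous_id).continuousOn
  intro τ hτ
  exact mul_ne_zero (by norm_num) (ne_of_gt hτ.1)

lemma cont_div (y t : ℝ) :
    ContinuousOn (fun τ : ℝ => -(y/(2*τ))) (Ioc 0 t) := by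
  apply ContinuousOn.neg
  apply ContinuousOn.div continuousOn_const (continuous_const.mul continuous_id).continuousOn
  intro τ hτ
  exact mul_ne_zero (by norm_num) (ne_of_gt hτ.1)

lemma cont_aux (s y t : ℝ) :
    ContinuousOn (fun τ => τ ^ (-(s+1)) * Real.exp (-τ - y^2 / (4*τ))) (Ioc 0 t) :=
  (cont_rpow s t).mul (cont_exp y t)

lemma gI_intervalIntegrable (s t x : ℝ) (hx : 0 < x) (ht : 0 < t) :
    IntervalIntegrable (fun τ => τ ^ (-(s+1)) * Real.exp (-τ - x^2 / (4*τ))) volume 0 t := by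
  rw [intervalIntegrable_iff, uIoc_of_le ht.le]
  refine ⟨(cont_aux s x t).aestronglyMeasurable measurableSet_Ioc, ?_⟩
  apply HasFiniteIntegral.restrict_of_bounded
    (C := ((Nat.ceil (s+1)).factorial : ℝ) / (x^2/4) ^ (Nat.ceil (s+1)) *
      t ^ ((Nat.ceil (s+1) : ℝ) - (s+1))) measure_Ioc_lt_top
  rw [ae_restrict_iff' measurableSet_Ioc]
  filter_upwards with τ hτ
  have hτ0 := hτ.1
  have h1 : Real.exp (-τ - x^2/(4*τ)) ≤ Real.exp (-((x^2/4)/τ)) := by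
    apply Real.exp_le_exp.2
    have : x^2/(4*τ) = (x^2/4)/τ := by ring
    rw [this]; linarith [hτ0.le]
  have h2 : ‖τ ^ (-(s+1)) * Real.exp (-τ - x^2/(4*τ))‖
      = τ ^ (-(s+1)) * Real.exp (-τ - x^2/(4*τ)) := by
    rw [Real.norm_eq_abs, abs_of_nonneg]; positivity
  rw [h2]
  calc τ ^ (-(s+1)) * Real.exp (-τ - x^2/(4*τ))
      ≤ τ ^ (-(s+1)) * Real.exp (-((x^2/4)/τ)) := by
        apply mul_le_mul_of_nonneg_left h1 (by positivity)
    _ ≤ _ := bound_aux (s+1) (x^2/4) t (by positivity) hτ0 hτ.2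

lemma gI_hasDerivAt (s t x : ℝ) (hx : 0 < x) (ht : 0 < t) :
    HasDerivAt (fun y => gI s t y) (-(x/2) * gI (s+1) t x) x := by
  set F : ℝ → ℝ → ℝ := fun y τ => τ ^ (-(s+1)) * Real.exp (-τ - y^2 / (4*τ)) with hF
  set F' : ℝ → ℝ → ℝ :=
    fun y τ => τ ^ (-(s+1)) * (Real.exp (-τ - y^2 / (4*τ)) * (-(y/(2*τ)))) with hF'
  have hIoc : Set.uIoc (0:ℝ) t = Ioc 0 t := uIoc_of_le ht.le
  -- the bound constant
  set C : ℝ := (3*x/4) * (((Nat.ceil (s+2)).factorial : ℝ) / (x^2/16) ^ (Nat.ceil (s+2)) *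
      t ^ ((Nat.ceil (s+2) : ℝ) - (s+2))) with hC
  have key : IntervalIntegrable (F' x) volume 0 t ∧
      HasDerivAt (fun y => ∫ τ in (0:ℝ)..t, F y τ) (∫ τ in (0:ℝ)..t, F' x τ) x := by
    apply intervalIntegral.hasDerivAt_integral_of_dominated_loc_of_deriv_le
      (F := F) (F' := F') (bound := fun _ => C) (s := ball x (x/2)) (ball_mem_nhds x (half_pos hx))
    · filter_upwards with y
      rw [hIoc]
      exact (cont_aux s y t).aestronglyMeasurable measurableSet_Ioc
    · exact gI_intervalIntegrable s t x hx ht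
    · rw [hIoc]
      apply ContinuousOn.aestronglyMeasurable _ measurableSet_Ioc
      exact (cont_rpow s t).mul ((cont_exp x t).mul (cont_div x t))
    · filter_upwards with τ hτ y hy
      rw [hIoc] at hτ
      have hτ0 := hτ.1
      have hy1 : x/2 < y := by
        have := abs_lt.1 (mem_ball_iff_norm.1 hy); linarith [this.1]
      have hy2 : y < 3*x/2 := by
        have := abs_lt.1 (mem_ball_iff_norm.1 hy); linarith [this.2]
      have hy0 : 0 < y := lt_trans (half_pos hx) hy1
      have hnorm : ‖F' y τ‖ = τ ^ (-(s+1)) * (Real.exp (-τ - y^2/(4*τ)) * (y/(2*τ))) := by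
        simp only [hF', Real.norm_eq_abs]
        rw [show τ ^ (-(s+1)) * (Real.exp (-τ - y^2/(4*τ)) * (-(y/(2*τ))))
          = -(τ ^ (-(s+1)) * (Real.exp (-τ - y^2/(4*τ)) * (y/(2*τ)))) by ring]
        rw [abs_neg, abs_of_nonneg]; positivity
      rw [hnorm]
      have hexp : Real.exp (-τ - y^2/(4*τ)) ≤ Real.exp (-((x^2/16)/τ)) := by
        apply Real.exp_le_exp.2
        have h4 : x^2/16 ≤ y^2/4 := by nlinarith
        have : (x^2/16)/τ ≤ y^2/(4*τ) := by
          rw [div_le_div_iff₀ hτ0 (by positivity)]; nlinarith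
        linarith
      calc τ ^ (-(s+1)) * (Real.exp (-τ - y^2/(4*τ)) * (y/(2*τ)))
          ≤ τ ^ (-(s+1)) * (Real.exp (-((x^2/16)/τ)) * ((3*x/2)/(2*τ))) := by
            apply mul_le_mul_of_nonneg_left _ (by positivity)
            apply mul_le_mul hexp _ (by positivity) (Real.exp_pos _).le
            apply div_le_div_of_nonneg_right hy2.le (by positivity)
        _ = (3*x/4) * (τ ^ (-(s+1)) * τ⁻¹ * Real.exp (-((x^2/16)/τ))) := by
            field_simp; ring
        _ = (3*x/4) * (τ ^ (-(s+2)) * Real.exp (-((x^2/16)/τ))) := by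
            rw [show (τ:ℝ)⁻¹ = τ ^ (-1:ℝ) by rw [Real.rpow_neg_one],
              ← Real.rpow_add hτ0]
            ring_nf
        _ ≤ C := by
            rw [hC]
            apply mul_le_mul_of_nonneg_left _ (by positivity)
            exact bound_aux (s+2) (x^2/16) t (by positivity) hτ0 hτ.2
    · exact intervalIntegrable_const
    · filter_upwards with τ hτ y hy
      rw [hIoc] at hτ
      have hτ0 := hτ.1
      have h1 : HasDerivAt (fun y : ℝ => -τ - y^2/(4*τ)) (-(y/(2*τ))) y := by
        have h : HasDerivAt (fun x : ℝ => -τ - x ^ 2 / (4 * τ)) (-(((2:ℕ):ℝ) * y ^ (2 - 1) / (4 * τ))) y := ((hasDerivAt_pow 2 y).div_const (4*τ)).const_sub (-τ)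
        convert h using 1
        field_simp; ring
      exact (h1.exp.const_mul (τ ^ (-(s+1))))
  have heq : (∫ τ in (0:ℝ)..t, F' x τ) = -(x/2) * gI (s+1) t x := by
    rw [gI, ← intervalIntegral.integral_const_mul]
    apply intervalIntegral.integral_congr_ae
    rw [hIoc]
    filter_upwards with τ hτ
    have hτ0 := hτ.1
    simp only [hF']
    rw [show (-(s+1+1)) = -(s+1) + (-1:ℝ) by ring, Real.rpow_add hτ0, Real.rpow_neg_one]
    field_simp
  rw [← heq]
  exact key.2

lemma shu_div (μ t y : ℝ) (hy : 0 < y) :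
    shu μ y t / y ^ μ = (1/2) * (1/2:ℝ) ^ μ * gI μ t y := by
  rw [shu, gI]
  have h1 : (y/2:ℝ) ^ μ = y ^ μ * (1/2:ℝ) ^ μ := by
    rw [show (y/2:ℝ) = y * (1/2) by ring, Real.mul_rpow hy.le (by norm_num)]
  have h2 : (y:ℝ) ^ μ ≠ 0 := (Real.rpow_pos_of_pos hy μ).ne'
  rw [h1]
  field_simp
  congr 1; ext τ; ring_nf

lemma main_aux (ν t : ℝ) (ht : 0 < t) : ∀ k : ℕ, ∀ x : ℝ, 0 < x →
    (fun f : ℝ → ℝ => fun y => (1/y) * deriv f y)^[k] (fun y => shu ν y t / y ^ ν) x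
      = (-1)^k * ((1/2) * (1/2:ℝ) ^ (ν+(k:ℝ)) * gI (ν+(k:ℝ)) t x) := by
  intro k
  induction k with
  | zero =>
    intro x hx
    simpa using shu_div ν t x hx
  | succ k ih =>
    intro x hx
    rw [Function.iterate_succ_apply']
    have hev : (fun f : ℝ → ℝ => fun y => (1/y) * deriv f y)^[k] (fun y => shu ν y t / y ^ ν)
        =ᶠ[nhds x] fun y => ((-1:ℝ)^k * ((1/2) * (1/2:ℝ) ^ (ν+(k:ℝ)))) * gI (ν+(k:ℝ)) t y := by
      filter_upwards [Ioi_mem_nhds hx] with y hy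
      rw [ih y hy]; ring
    have hd := ((gI_hasDerivAt (ν+(k:ℝ)) t x hx ht).const_mul
      ((-1:ℝ)^k * ((1/2) * (1/2:ℝ) ^ (ν+(k:ℝ))))).deriv
    show (1/x) * deriv _ x = _
    rw [hev.deriv_eq, hd]
    have hx0 : x ≠ 0 := hx.ne'
    have harg : ν + ((k:ℕ)+1:ℕ) = (ν + (k:ℝ)) + 1 := by push_cast; ring
    rw [harg]
    have hhalf : (1/2:ℝ) ^ ((ν+(k:ℝ))+1) = (1/2:ℝ) ^ (ν+(k:ℝ)) * (1/2) := by
      rw [Real.rpow_add (by norm_num), Real.rpow_one]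
    rw [hhalf, pow_succ]
    field_simp

theorem stmt_10 (ν : ℝ) (k : ℕ) (x t : ℝ) (hx : 0 < x) (ht : 0 < t) :
    (fun f : ℝ → ℝ => fun y => (1/y) * deriv f y)^[k]
        (fun y => shu ν y t / y ^ ν) x
      = (-1)^k * (shu (ν + (k:ℝ)) x t / x ^ (ν + (k:ℝ))) := by
  rw [main_aux ν t ht k x hx, shu_div (ν + (k:ℝ)) t x hx]
end

section
/- For every real ν, every x > 0 and every t > 0, the Shu function admits the convergent series expansion S_ν(x,t) = K_ν(x) - Σ_{k=0}^∞ ( (-1)^k / (2·k!) ) · (x/2)^{ν+2k} · Γ(-ν-k, t), where K_ν(x) = (1/2)·(x/2)^ν · ∫_0^∞ τ^{-(ν+1)} · exp(-τ - x²/(4τ)) dτ is the Macdonald function and Γ(a, s) = ∫_s^∞ τ^{a-1}·e^{-τ} dτ is the upper incomplete gamma function. -/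
open Real MeasureTheory

/-- The Macdonald function `K_ν(x) = (1/2)(x/2)^ν ∫_0^∞ τ^{-(ν+1)} e^{-τ - x²/(4τ)} dτ`. -/
noncomputable def macdonald (ν x : ℝ) : ℝ :=
  (1/2) * (x/2) ^ ν * ∫ τ in Set.Ioi (0:ℝ), τ ^ (-(ν+1)) * Real.exp (-τ - x^2 / (4*τ))

/-- The upper incomplete gamma function `Γ(a,s) = ∫_s^∞ τ^{a-1} e^{-τ} dτ`. -/
noncomputable def uGamma (a s : ℝ) : ℝ :=
  ∫ τ in Set.Ioi s, τ ^ (a-1) * Real.exp (-τ)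

open Set Filter

lemma aux_gamma_int (a t : ℝ) (ht : 0 < t) :
    IntegrableOn (fun τ : ℝ => τ ^ (a - 1) * Real.exp (-τ)) (Set.Ioi t) := by
  apply integrable_of_isBigO_exp_neg (b := 1/2) (by norm_num)
  · intro τ hτ
    have hτ0 : τ ≠ 0 := (ht.trans_le hτ).ne'
    exact ((Real.continuousAt_rpow_const τ (a-1) (Or.inl hτ0)).continuousWithinAt).mul
      ((Real.continuous_exp.comp continuous_neg).continuousWithinAt)
  · have := (Real.Gamma_integrand_isLittleO (a-1)).isBigO
    simpa [mul_comm] using this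

lemma aux_meas (ν x : ℝ) :
    Measurable (fun τ : ℝ => τ ^ (-(ν+1)) * Real.exp (-τ - x^2 / (4*τ))) := by
  fun_prop

lemma aux_g_int (ν x t : ℝ) (hx : 0 < x) (ht : 0 < t) :
    IntegrableOn (fun τ : ℝ => τ ^ (-(ν+1)) * Real.exp (-τ - x^2 / (4*τ))) (Set.Ioi 0) := by
  have hc : (0:ℝ) < x^2/4 := by positivity
  rw [← Set.Ioc_union_Ioi_eq_Ioi ht.le]
  apply IntegrableOn.union
  · -- bounded on Ioc 0 t
    set n : ℕ := ⌈ν + 1⌉₊ with hn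
    have hνn : ν + 1 ≤ (n:ℝ) := Nat.le_ceil _
    apply Measure.integrableOn_of_bounded (M := (n.factorial : ℝ) / (x^2/4)^n * (max t 1) ^ ((n:ℝ) - ν - 1))
        (measure_Ioc_lt_top (a := (0:ℝ)) (b := t) (μ := volume)).ne
        (aux_meas ν x).aestronglyMeasurable
    filter_upwards [ae_restrict_mem measurableSet_Ioc] with τ hτ
    have hτ0 : 0 < τ := hτ.1
    have h1 : Real.exp (-τ - x^2/(4*τ)) ≤ Real.exp (-(x^2/(4*τ))) := by
      apply Real.exp_le_exp.2; nlinarith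
    have hq : 0 < x^2/(4*τ) := by positivity
    have h2 : Real.exp (-(x^2/(4*τ))) ≤ (n.factorial : ℝ) * τ^n / (x^2/4)^n := by
      rw [Real.exp_neg]
      have hpos : 0 < (x^2/(4*τ))^n / (n.factorial : ℝ) := by positivity
      have hle := Real.pow_div_factorial_le_exp _ hq.le n
      calc (Real.exp (x^2/(4*τ)))⁻¹ ≤ ((x^2/(4*τ))^n / (n.factorial : ℝ))⁻¹ :=
            inv_anti₀ hpos hle
        _ = (n.factorial : ℝ) * τ^n / (x^2/4)^n := by
            rw [show x^2/(4*τ) = (x^2/4) / τ by ring, div_pow]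
            have h1' : (τ:ℝ)^n ≠ 0 := pow_ne_zero _ hτ0.ne'
            have h2' : ((x:ℝ)^2/4)^n ≠ 0 := pow_ne_zero _ hc.ne'
            have h3' : (n.factorial:ℝ) ≠ 0 := Nat.cast_ne_zero.2 n.factorial_ne_zero
            field_simp
    have h3 : τ ^ (-(ν+1)) * τ^n = τ ^ ((n:ℝ) - ν - 1) := by
      rw [← Real.rpow_natCast τ n, ← Real.rpow_add hτ0]
      ring_nf
    have h4 : τ ^ ((n:ℝ) - ν - 1) ≤ (max t 1) ^ ((n:ℝ) - ν - 1) := by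
      apply Real.rpow_le_rpow hτ0.le (hτ.2.trans (le_max_left t 1)) (by linarith)
    have h5 : (0:ℝ) ≤ τ ^ (-(ν+1)) := (Real.rpow_pos_of_pos hτ0 _).le
    rw [Real.norm_eq_abs, abs_of_nonneg (by positivity)]
    calc τ ^ (-(ν+1)) * Real.exp (-τ - x^2/(4*τ))
        ≤ τ ^ (-(ν+1)) * ((n.factorial : ℝ) * τ^n / (x^2/4)^n) :=
          mul_le_mul_of_nonneg_left (h1.trans h2) h5
      _ = (n.factorial : ℝ) / (x^2/4)^n * (τ ^ (-(ν+1)) * τ^n) := by ring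
      _ = (n.factorial : ℝ) / (x^2/4)^n * τ ^ ((n:ℝ) - ν - 1) := by rw [h3]
      _ ≤ (n.factorial : ℝ) / (x^2/4)^n * (max t 1) ^ ((n:ℝ) - ν - 1) := by
          apply mul_le_mul_of_nonneg_left h4 (by positivity)
  · apply (aux_gamma_int (-ν) t ht).mono' ((aux_meas ν x).aestronglyMeasurable.restrict)
    filter_upwards [ae_restrict_mem measurableSet_Ioi] with τ hτ
    have hτ0 : 0 < τ := ht.trans hτ
    rw [Real.norm_eq_abs, abs_of_nonneg (by positivity)]
    have : Real.exp (-τ - x^2/(4*τ)) ≤ Real.exp (-τ) := by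
      apply Real.exp_le_exp.2
      have : 0 < x^2/(4*τ) := by positivity
      linarith
    calc τ ^ (-(ν+1)) * Real.exp (-τ - x^2/(4*τ)) ≤ τ ^ (-(ν+1)) * Real.exp (-τ) :=
          mul_le_mul_of_nonneg_left this (Real.rpow_pos_of_pos hτ0 _).le
      _ = τ ^ (-ν - 1) * Real.exp (-τ) := by ring_nf

theorem stmt_13 (ν x t : ℝ) (hx : 0 < x) (ht : 0 < t) :
    HasSum (fun k : ℕ => ((-1)^k / (2 * (k.factorial : ℝ))) *
        (x/2) ^ (ν + 2*(k:ℝ)) * uGamma (-ν - (k:ℝ)) t)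
      (macdonald ν x - shu ν x t) := by
  have hx2 : (0:ℝ) < x/2 := by positivity
  set g : ℝ → ℝ := fun τ => τ ^ (-(ν+1)) * Real.exp (-τ - x^2 / (4*τ)) with hgdef
  set F : ℕ → ℝ → ℝ := fun k τ =>
    ((-1)^k / (2 * (k.factorial : ℝ))) * (x/2) ^ (ν + 2*(k:ℝ)) *
      (τ ^ ((-ν - (k:ℝ)) - 1) * Real.exp (-τ)) with hFdef
  have hE1 : ∀ k : ℕ, (x/2) ^ (ν + 2*(k:ℝ)) = (x/2) ^ ν * ((x/2)^2)^k := by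
    intro k
    rw [Real.rpow_add hx2, show 2*(k:ℝ) = ((2*k : ℕ) : ℝ) by push_cast; ring,
      Real.rpow_natCast, pow_mul]
  have hFint : ∀ k, Integrable (F k) (volume.restrict (Set.Ioi t)) := fun k =>
    (aux_gamma_int (-ν - (k:ℝ)) t ht).const_mul _
  set C : ℝ := ∫ τ in Set.Ioi t, τ ^ ((-ν) - 1) * Real.exp (-τ) with hC
  have hCnn : 0 ≤ C :=
    setIntegral_nonneg measurableSet_Ioi fun τ hτ => by
      have : 0 < τ := ht.trans hτ; positivity
  have key : ∀ k : ℕ, ∫ τ in Set.Ioi t, ‖F k τ‖ ≤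
      ((x/2) ^ ν * C / 2) * (((x/2)^2 * t⁻¹)^k / k.factorial) := by
    intro k
    have hB : IntegrableOn (fun τ => (x/2)^(ν+2*(k:ℝ)) / (2*(k.factorial:ℝ)) * t ^ (-(k:ℝ)) *
        (τ ^ ((-ν) - 1) * Real.exp (-τ))) (Set.Ioi t) := by
      have := (aux_gamma_int (-ν) t ht).const_mul
        ((x/2)^(ν+2*(k:ℝ)) / (2*(k.factorial:ℝ)) * t ^ (-(k:ℝ)))
      exact this
    have step1 : ∫ τ in Set.Ioi t, ‖F k τ‖ ≤
        ∫ τ in Set.Ioi t, (x/2)^(ν+2*(k:ℝ)) / (2*(k.factorial:ℝ)) * t ^ (-(k:ℝ)) *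
          (τ ^ ((-ν) - 1) * Real.exp (-τ)) := by
      apply setIntegral_mono_on (hFint k).norm hB measurableSet_Ioi
      intro τ hτ
      have hτ0 : 0 < τ := ht.trans hτ
      have hA : ‖((-1:ℝ))^k / (2*(k.factorial:ℝ)) * (x/2)^(ν+2*(k:ℝ))‖
          = (x/2)^(ν+2*(k:ℝ)) / (2*(k.factorial:ℝ)) := by
        rw [Real.norm_eq_abs, abs_mul, abs_div, abs_pow, abs_neg, abs_one, one_pow,
          abs_of_pos (Real.rpow_pos_of_pos hx2 _), abs_of_pos (by positivity)]
        ring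
      have e2 : τ ^ ((-ν - (k:ℝ)) - 1) = τ ^ ((-ν) - 1) * τ ^ (-(k:ℝ)) := by
        rw [← Real.rpow_add hτ0]; ring_nf
      have e3 : τ ^ (-(k:ℝ)) ≤ t ^ (-(k:ℝ)) :=
        Real.rpow_le_rpow_of_nonpos ht hτ.le (neg_nonpos_of_nonneg (Nat.cast_nonneg k))
      have hpos1 : (0:ℝ) ≤ τ ^ ((-ν) - 1) * Real.exp (-τ) := by positivity
      simp only [hFdef]
      rw [norm_mul, hA, Real.norm_eq_abs,
        abs_of_nonneg (by positivity : (0:ℝ) ≤ τ ^ ((-ν - (k:ℝ)) - 1) * Real.exp (-τ)), e2]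
      calc (x/2)^(ν+2*(k:ℝ)) / (2*(k.factorial:ℝ)) * (τ ^ ((-ν) - 1) * τ ^ (-(k:ℝ)) * Real.exp (-τ))
          = (x/2)^(ν+2*(k:ℝ)) / (2*(k.factorial:ℝ)) * ((τ ^ ((-ν) - 1) * Real.exp (-τ)) * τ ^ (-(k:ℝ))) := by
            ring
        _ ≤ (x/2)^(ν+2*(k:ℝ)) / (2*(k.factorial:ℝ)) * ((τ ^ ((-ν) - 1) * Real.exp (-τ)) * t ^ (-(k:ℝ))) := by
            apply mul_le_mul_of_nonneg_left (mul_le_mul_of_nonneg_left e3 hpos1) (by positivity)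
        _ = (x/2)^(ν+2*(k:ℝ)) / (2*(k.factorial:ℝ)) * t ^ (-(k:ℝ)) * (τ ^ ((-ν) - 1) * Real.exp (-τ)) := by
            ring
    have step2 : ∫ τ in Set.Ioi t, (x/2)^(ν+2*(k:ℝ)) / (2*(k.factorial:ℝ)) * t ^ (-(k:ℝ)) *
          (τ ^ ((-ν) - 1) * Real.exp (-τ))
        = ((x/2) ^ ν * C / 2) * (((x/2)^2 * t⁻¹)^k / k.factorial) := by
      rw [MeasureTheory.integral_const_mul, ← hC, hE1 k,
        show t ^ (-(k:ℝ)) = (t⁻¹)^k by rw [Real.rpow_neg ht.le, Real.rpow_natCast, inv_pow],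
        mul_pow]
      ring
    rw [← step2]; exact step1
  have hsumm : Summable (fun k => ∫ τ in Set.Ioi t, ‖F k τ‖) :=
    Summable.of_nonneg_of_le (fun k => integral_nonneg fun τ => norm_nonneg _) key
      ((Real.summable_pow_div_factorial ((x/2)^2 * t⁻¹)).mul_left _)
  have H := hasSum_integral_of_summable_integral_norm hFint hsumm
  have hfun : (fun k => ∫ τ in Set.Ioi t, F k τ)
      = (fun k : ℕ => ((-1)^k / (2 * (k.factorial : ℝ))) *
          (x/2) ^ (ν + 2*(k:ℝ)) * uGamma (-ν - (k:ℝ)) t) := by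
    funext k
    simp only [hFdef]
    rw [MeasureTheory.integral_const_mul]
    rfl
  have hval : ∫ τ in Set.Ioi t, ∑' k, F k τ = macdonald ν x - shu ν x t := by
    have h1 : Set.EqOn (fun τ => ∑' k, F k τ) (fun τ => (1/2) * (x/2)^ν * g τ) (Set.Ioi t) := by
      intro τ hτ
      show (∑' k, F k τ) = 1/2 * (x/2)^ν * g τ
      have hτ0 : 0 < τ := ht.trans hτ
      have h0 : HasSum (fun k : ℕ => (-(x^2/(4*τ)))^k / k.factorial)
          (Real.exp (-(x^2/(4*τ)))) := by
        rw [Real.exp_eq_exp_ℝ]; exact NormedSpace.expSeries_div_hasSum_exp _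
      have h2 := h0.mul_left ((1/2) * (x/2)^ν * (τ ^ (-(ν+1)) * Real.exp (-τ)))
      have h3 : (fun k : ℕ => (1/2) * (x/2)^ν * (τ ^ (-(ν+1)) * Real.exp (-τ)) *
          ((-(x^2/(4*τ)))^k / k.factorial)) = fun k => F k τ := by
        funext k
        simp only [hFdef]
        have E2 : τ ^ ((-ν - (k:ℝ)) - 1) = τ ^ (-(ν+1)) * (τ⁻¹)^k := by
          rw [show (-ν - (k:ℝ)) - 1 = (-(ν+1)) + (-(k:ℝ)) by ring, Real.rpow_add hτ0]
          congr 1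
          rw [Real.rpow_neg hτ0.le, Real.rpow_natCast, inv_pow]
        have E0 : -(x^2/(4*τ)) = (-1) * ((x/2)^2 * τ⁻¹) := by
          field_simp [hτ0.ne']
          ring
        have E3 : (-(x^2/(4*τ)))^k = (-1:ℝ)^k * (((x/2)^2)^k * (τ⁻¹)^k) := by
          rw [E0, mul_pow, mul_pow]
        rw [hE1 k, E2, E3]
        ring
      have h4 := h3 ▸ h2
      rw [h4.tsum_eq]
      show _ = 1/2 * (x/2)^ν * (τ ^ (-(ν+1)) * Real.exp (-τ - x^2/(4*τ)))
      rw [show -τ - x^2/(4*τ) = -τ + -(x^2/(4*τ)) by ring, Real.exp_add]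
      ring
    rw [setIntegral_congr_fun measurableSet_Ioi h1, MeasureTheory.integral_const_mul]
    have hsplit : ∫ τ in Set.Ioi (0:ℝ), g τ
        = (∫ τ in Set.Ioc 0 t, g τ) + ∫ τ in Set.Ioi t, g τ := by
      rw [← Set.Ioc_union_Ioi_eq_Ioi ht.le]
      exact setIntegral_union (Set.Ioc_disjoint_Ioi le_rfl) measurableSet_Ioi
        ((aux_g_int ν x t hx ht).mono_set Set.Ioc_subset_Ioi_self)
        ((aux_g_int ν x t hx ht).mono_set (Set.Ioi_subset_Ioi ht.le))
    rw [macdonald, shu, intervalIntegral.integral_of_le ht.le]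
    show _ = 1/2 * (x/2)^ν * (∫ τ in Set.Ioi (0:ℝ), g τ) - 1/2 * (x/2)^ν * ∫ τ in Set.Ioc 0 t, g τ
    rw [hsplit]
    ring
  rw [← hfun, ← hval]
  exact H
end

section
/- For every real ν and every fixed x > 0, the Shu function has the leading-order behavior S_ν(x,t) ~ (1/2)·(x/2)^{ν-2} · t^{1-ν} · exp(-x²/(4t)) as t → 0⁺; that is, the ratio S_ν(x,t) / [ (1/2)·(x/2)^{ν-2} · t^{1-ν} · exp(-x²/(4t)) ] tends to 1 as t tends to 0 from the right. -/
open Real MeasureTheory Filter Set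

private lemma aux_rpow_exp_tendsto (s a : ℝ) (ha : 0 < a) :
    Tendsto (fun t : ℝ => t ^ s * Real.exp (-(a / t))) (nhdsWithin 0 (Set.Ioi 0)) (nhds 0) := by
  have h1 := tendsto_rpow_mul_exp_neg_mul_atTop_nhds_zero (-s) a ha
  have h2 : Tendsto (fun t : ℝ => t⁻¹) (nhdsWithin (0:ℝ) (Set.Ioi 0)) atTop :=
    tendsto_inv_nhdsGT_zero
  refine (h1.comp h2).congr' ?_
  filter_upwards [self_mem_nhdsWithin] with t ht
  have ht' : (0:ℝ) < t := ht
  simp only [Function.comp]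
  rw [Real.inv_rpow ht'.le, Real.rpow_neg ht'.le, inv_inv,
    show -a * t⁻¹ = -(a / t) by ring]

theorem stmt_14 (ν x : ℝ) (hx : 0 < x) :
    Tendsto (fun t : ℝ =>
        shu ν x t / ((1/2) * (x/2) ^ (ν-2) * t ^ (1-ν) * Real.exp (-x^2 / (4*t))))
      (nhdsWithin 0 (Set.Ioi 0)) (nhds 1) := by
  have hx2 : (0:ℝ) < x/2 := by linarith
  set a : ℝ := x^2/4 with ha_def
  have ha : 0 < a := by positivity
  set K : ℝ := (1/2) * (x/2) ^ ν with hK_def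
  set C : ℝ := (1/2) * (x/2) ^ (ν-2) with hC_def
  have hKpos : 0 < K := by rw [hK_def]; positivity
  have hCpos : 0 < C := by rw [hC_def]; positivity
  have hKC : K = C * a := by
    rw [hK_def, hC_def, ha_def]
    have h2 : (x/2) ^ ν = (x/2) ^ (ν-2) * (x/2) ^ (2:ℝ) := by
      rw [← Real.rpow_add hx2]; ring_nf
    rw [h2, show (2:ℝ) = ((2:ℕ):ℝ) by norm_num, Real.rpow_natCast]
    ring
  set f : ℝ → ℝ :=
    fun τ => if 0 < τ then τ ^ (-(ν+1)) * Real.exp (-τ - x^2 / (4*τ)) else 0 with hf_def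
  -- continuity of f on (0, ∞)
  have hraw : ContinuousOn (fun τ : ℝ => τ ^ (-(ν+1)) * Real.exp (-τ - x^2 / (4*τ)))
      (Set.Ioi 0) := by
    apply ContinuousOn.mul
    · exact fun t ht =>
        (Real.continuousAt_rpow_const t _ (Or.inl (ne_of_gt ht))).continuousWithinAt
    · apply Real.continuous_exp.comp_continuousOn
      exact (continuous_neg.continuousOn).sub
        (continuousOn_const.div ((continuous_const.mul continuous_id).continuousOn)
          (fun t ht => by
            have h : (0:ℝ) < t := ht
            positivity))
  have hfcont : ContinuousOn f (Set.Ioi 0) := by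
    refine hraw.congr (fun t ht => ?_)
    simp only [hf_def]
    rw [if_pos (show (0:ℝ) < t from ht)]
  -- f tends to 0 at 0⁺
  have hf0 : Tendsto f (nhdsWithin 0 (Set.Ioi 0)) (nhds 0) := by
    have h1 : Tendsto (fun t : ℝ => t ^ (-(ν+1)) * Real.exp (-(a/t)))
        (nhdsWithin 0 (Set.Ioi 0)) (nhds 0) := aux_rpow_exp_tendsto _ _ ha
    have h2 : Tendsto (fun t : ℝ => Real.exp (-t)) (nhdsWithin 0 (Set.Ioi 0)) (nhds 1) := by
      have h3 : Tendsto (fun t : ℝ => Real.exp (-t)) (nhds 0) (nhds 1) := by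
        have := (Real.continuous_exp.comp continuous_neg).tendsto 0
        simpa [Function.comp_def] using this
      exact h3.mono_left nhdsWithin_le_nhds
    have h4 := h1.mul h2
    rw [zero_mul] at h4
    refine h4.congr' ?_
    filter_upwards [self_mem_nhdsWithin] with t ht
    have ht' : (0:ℝ) < t := ht
    simp only [hf_def]
    rw [if_pos ht', show -t - x^2/(4*t) = -(a/t) + -t by rw [ha_def]; ring, Real.exp_add]
    ring
  -- f tends to 0 within Ici 0
  have hf0' : Tendsto f (nhdsWithin 0 (Set.Ici 0)) (nhds 0) := by
    rw [← Set.Ioi_union_left, nhdsWithin_union, tendsto_sup]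
    refine ⟨hf0, ?_⟩
    rw [nhdsWithin_singleton]
    have hfz : f 0 = 0 := by simp [hf_def]
    have := tendsto_pure_nhds f 0
    rwa [hfz] at this
  have hfz : f 0 = 0 := by simp [hf_def]
  -- continuity on [0,1]
  have hfcontIcc : ContinuousOn f (Set.Icc 0 1) := by
    intro t ht
    rcases eq_or_lt_of_le ht.1 with h0 | h0
    · have : Tendsto f (nhdsWithin 0 (Set.Icc 0 1)) (nhds (f 0)) := by
        rw [hfz]
        exact hf0'.mono_left (nhdsWithin_mono _ Set.Icc_subset_Ici_self)
      rw [← h0]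
      exact this
    · exact ((hfcont t h0).continuousAt (Ioi_mem_nhds h0)).continuousWithinAt
  have huIcc : Set.uIcc (0:ℝ) 1 = Set.Icc 0 1 := Set.uIcc_of_le (by norm_num)
  have hintOn : IntegrableOn f (Set.uIcc (0:ℝ) 1) := by
    rw [huIcc]
    exact hfcontIcc.integrableOn_Icc
  have hint : IntervalIntegrable f volume 0 1 := by
    apply ContinuousOn.intervalIntegrable
    rwa [huIcc]
  -- the threshold b
  set b : ℝ := min 1 (a / (|1-ν| + 1)) with hb_def
  have hb : 0 < b := lt_min one_pos (by positivity)
  have hb1 : b ≤ 1 := min_le_left _ _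
  have hkey : ∀ t ∈ Set.Ioo (0:ℝ) b, 0 < (1-ν) + a/t := by
    intro t ht
    have ht0 := ht.1
    have htb : t < a / (|1-ν|+1) := lt_of_lt_of_le ht.2 (min_le_right _ _)
    have h5 : |1-ν| + 1 < a / t := by
      rw [lt_div_iff₀ ht0]
      rw [lt_div_iff₀ (by positivity)] at htb
      nlinarith
    have h6 : -(1-ν) ≤ |1-ν| := neg_le_abs _
    linarith
  -- the functions
  set g : ℝ → ℝ := fun t => C * t ^ (1-ν) * Real.exp (-x^2 / (4*t)) with hg_def
  set F : ℝ → ℝ := fun t => K * ∫ τ in (0:ℝ)..t, f τ with hF_def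
  set F' : ℝ → ℝ := fun t => K * f t with hF'_def
  set g' : ℝ → ℝ :=
    fun t => C * Real.exp (-x^2 / (4*t)) * t ^ (-ν) * ((1-ν) + a/t) with hg'_def
  -- derivative of g
  have hgderiv : ∀ t ∈ Set.Ioo (0:ℝ) b, HasDerivAt g (g' t) t := by
    intro t ht
    have ht0 : (0:ℝ) < t := ht.1
    have h1 : HasDerivAt (fun t : ℝ => t ^ (1-ν)) ((1-ν) * t ^ (1-ν-1)) t :=
      Real.hasDerivAt_rpow_const (Or.inl ht0.ne')
    have h2 : HasDerivAt (fun t : ℝ => -x^2/(4*t)) (x^2/4 * (t^2)⁻¹) t := by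
      have h := (hasDerivAt_inv ht0.ne').const_mul (-x^2/4)
      have heq : (fun y : ℝ => -x^2/(4*y)) = fun y => -x^2/4 * y⁻¹ := by
        funext y; ring
      rw [heq, show x^2/4 * (t^2)⁻¹ = -x^2/4 * -(t^2)⁻¹ by ring]
      exact h
    have h3 := h2.exp
    have h4 := (h1.mul h3).const_mul C
    have key : C * ((1-ν) * t ^ (1-ν-1) * Real.exp (-x^2/(4*t)) +
        t ^ (1-ν) * (Real.exp (-x^2/(4*t)) * (x^2/4 * (t^2)⁻¹))) = g' t := by
      simp only [hg'_def]
      rw [show (1:ℝ)-ν-1 = -ν by ring, show (1:ℝ)-ν = -ν+1 by ring,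
        Real.rpow_add ht0, Real.rpow_one, ha_def]
      field_simp
    have hfun : g = fun t : ℝ => C * (t ^ (1-ν) * Real.exp (-x^2/(4*t))) := by
      funext s; simp only [hg_def]; ring
    rw [hfun, ← key]
    exact h4
  -- g' nonzero
  have hg'ne : ∀ t ∈ Set.Ioo (0:ℝ) b, g' t ≠ 0 := by
    intro t ht
    have ht0 : (0:ℝ) < t := ht.1
    have hp := hkey t ht
    have : 0 < g' t := by
      simp only [hg'_def]
      have h1 : 0 < Real.exp (-x^2/(4*t)) := Real.exp_pos _
      have h2 : 0 < t ^ (-ν) := Real.rpow_pos_of_pos ht0 _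
      positivity
    exact this.ne'
  -- derivative of F
  have hFderiv : ∀ t ∈ Set.Ioo (0:ℝ) b, HasDerivAt F (F' t) t := by
    intro t ht
    have ht0 : (0:ℝ) < t := ht.1
    have hsub : Set.uIcc (0:ℝ) t ⊆ Set.uIcc (0:ℝ) 1 := by
      rw [Set.uIcc_of_le ht0.le, huIcc]
      exact Set.Icc_subset_Icc le_rfl (le_trans ht.2.le hb1)
    have hint' : IntervalIntegrable f volume 0 t := hint.mono_set hsub
    have hmeas : StronglyMeasurableAtFilter f (nhds t) volume :=
      hfcont.stronglyMeasurableAtFilter isOpen_Ioi t ht0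
    have hcontAt : ContinuousAt f t := hfcont.continuousAt (Ioi_mem_nhds ht0)
    exact (intervalIntegral.integral_hasDerivAt_right hint' hmeas hcontAt).const_mul K
  -- F tends to 0
  have hF0 : Tendsto F (nhdsWithin 0 (Set.Ioi 0)) (nhds 0) := by
    have hc : ContinuousOn (fun u => ∫ τ in (0:ℝ)..u, f τ) (Set.uIcc 0 1) :=
      intervalIntegral.continuousOn_primitive_interval hintOn
    have h0mem : (0:ℝ) ∈ Set.uIcc (0:ℝ) 1 := by rw [huIcc]; exact ⟨le_rfl, by norm_num⟩
    have hcw := hc 0 h0mem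
    have h1 : Tendsto (fun u => ∫ τ in (0:ℝ)..u, f τ)
        (nhdsWithin 0 (Set.Icc 0 1)) (nhds 0) := by
      have := hcw.tendsto
      rw [intervalIntegral.integral_same] at this
      rwa [huIcc] at this
    have h2 : Tendsto (fun u => ∫ τ in (0:ℝ)..u, f τ)
        (nhdsWithin 0 (Set.Ioi 0)) (nhds 0) := by
      rw [← nhdsWithin_Ioc_eq_nhdsGT (by norm_num : (0:ℝ) < 1)]
      exact h1.mono_left (nhdsWithin_mono _ Set.Ioc_subset_Icc_self)
    have h3 := h2.const_mul K
    rw [mul_zero] at h3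
    exact h3
  -- g tends to 0
  have hg0 : Tendsto g (nhdsWithin 0 (Set.Ioi 0)) (nhds 0) := by
    have h1 := (aux_rpow_exp_tendsto (1-ν) a ha).const_mul C
    rw [mul_zero] at h1
    refine h1.congr' ?_
    filter_upwards [self_mem_nhdsWithin] with t ht
    simp only [hg_def]
    rw [show -(a/t) = -x^2/(4*t) by rw [ha_def]; ring]
    ring
  -- ratio of derivatives tends to 1
  have hratio : Tendsto (fun t => F' t / g' t) (nhdsWithin 0 (Set.Ioi 0)) (nhds 1) := by
    have hcont1 : ContinuousAt (fun t : ℝ => K/C * Real.exp (-t) / ((1-ν)*t + a)) 0 := by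
      apply ContinuousAt.div
      · exact continuousAt_const.mul (Real.continuous_exp.comp continuous_neg).continuousAt
      · exact ((continuousAt_const.mul continuousAt_id).add continuousAt_const)
      · simpa using ha.ne'
    have hval : K/C * Real.exp (-(0:ℝ)) / ((1-ν)*0 + a) = 1 := by
      rw [hKC]
      simp only [neg_zero, Real.exp_zero, mul_zero, zero_add, mul_one]
      field_simp
    have hcont : Tendsto (fun t : ℝ => K/C * Real.exp (-t) / ((1-ν)*t + a))
        (nhds 0) (nhds 1) := by
      have := hcont1.tendsto
      rwa [hval] at this
    refine (hcont.mono_left nhdsWithin_le_nhds).congr' ?_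
    filter_upwards [Ioo_mem_nhdsGT_of_mem (Set.left_mem_Ico.mpr hb)] with t ht
    have ht0 : (0:ℝ) < t := ht.1
    have hpos := hkey t ht
    have hden : 0 < (1-ν)*t + a := by
      have heq : (1-ν)*t + a = t * ((1-ν) + a/t) := by
        field_simp
      rw [heq]; positivity
    simp only [hF'_def, hg'_def, hf_def]
    rw [if_pos ht0,
      show -t - x^2/(4*t) = -(x^2/(4*t)) + -t by ring, Real.exp_add,
      show -(x^2/(4*t)) = -x^2/(4*t) by ring,
      show -(ν+1) = -ν + (-1) by ring, Real.rpow_add ht0, Real.rpow_neg_one]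
    have hEne : Real.exp (-x^2/(4*t)) ≠ 0 := (Real.exp_pos _).ne'
    have htne : t ≠ 0 := ht0.ne'
    have hCne : C ≠ 0 := hCpos.ne'
    have hrne : t ^ (-ν) ≠ 0 := (Real.rpow_pos_of_pos ht0 _).ne'
    field_simp
  -- L'Hôpital
  have main := HasDerivAt.lhopital_zero_right_on_Ioo hb hFderiv hgderiv hg'ne hF0 hg0 hratio
  refine main.congr' ?_
  filter_upwards [self_mem_nhdsWithin] with t ht
  have ht0 : (0:ℝ) < t := ht
  have hFeq : shu ν x t = F t := by
    simp only [hF_def, hK_def, shu]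
    congr 1
    apply intervalIntegral.integral_congr_ae
    apply MeasureTheory.ae_of_all
    intro τ hτ
    rw [Set.uIoc_of_le ht0.le] at hτ
    simp only [hf_def]
    rw [if_pos hτ.1]
  have hgeq : (1/2) * (x/2) ^ (ν-2) * t ^ (1-ν) * Real.exp (-x^2 / (4*t)) = g t := by
    simp only [hg_def, hC_def]
  rw [hFeq, hgeq]
end

section
/- For every real ν and every fixed x > 0, the difference between the Macdonald function and the Shu function satisfies t^{ν+1} · e^{t} · ( K_ν(x) - S_ν(x,t) ) → (1/2)·(x/2)^ν as t → +∞, where K_ν(x) = (1/2)·(x/2)^ν · ∫_0^∞ τ^{-(ν+1)} · exp(-τ - x²/(4τ)) dτ. In particular S_ν(x,t) → K_ν(x) as t → +∞. -/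
set_option maxHeartbeats 1000000

open Real MeasureTheory Filter

section Aux

open Set


lemma shu_integrable (ν x : ℝ) (hx : 0 < x) :
    IntegrableOn (fun τ : ℝ => τ ^ (-(ν+1)) * Real.exp (-τ - x^2 / (4*τ))) (Ioi 0) := by
  obtain ⟨n, hn⟩ := exists_nat_gt ν
  have hmeas : AEStronglyMeasurable (fun τ : ℝ => τ ^ (-(ν+1)) * Real.exp (-τ - x^2 / (4*τ)))
      (volume.restrict (Ioi 0)) := by
    apply Measurable.aestronglyMeasurable
    fun_prop
  have hGamma : IntegrableOn (fun τ : ℝ => Real.exp (-τ) * τ ^ ((n - ν) - 1)) (Ioi 0) :=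
    Real.GammaIntegral_convergent (by linarith)
  refine Integrable.mono (hGamma.const_mul (n.factorial * (4 / x^2)^n)) hmeas ?_
  filter_upwards [ae_restrict_mem measurableSet_Ioi] with τ (hτ : 0 < τ)
  have hx2 : 0 < x^2 := by positivity
  have hy : 0 < x^2 / (4*τ) := by positivity
  have h3 : 0 < (x^2/(4*τ))^n := by positivity
  have key : Real.exp (-(x^2 / (4*τ))) ≤ n.factorial * (4*τ/x^2)^n := by
    have h1 : (x^2/(4*τ))^n ≤ Real.exp (x^2/(4*τ)) * n.factorial := by
      rw [← div_le_iff₀ (by positivity)]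
      calc (x^2/(4*τ))^n / n.factorial ≤ ∑ i ∈ Finset.range (n+1), (x^2/(4*τ))^i / i.factorial :=
            Finset.single_le_sum (f := fun i => (x^2/(4*τ))^i / i.factorial)
              (fun i _ => by positivity) (Finset.self_mem_range_succ n)
        _ ≤ Real.exp (x^2/(4*τ)) := by
            simpa using Real.sum_le_exp_of_nonneg hy.le (n+1)
    have h4 : Real.exp (-(x^2/(4*τ))) * (x^2/(4*τ))^n ≤ n.factorial := by
      calc Real.exp (-(x^2/(4*τ))) * (x^2/(4*τ))^n
          ≤ Real.exp (-(x^2/(4*τ))) * (Real.exp (x^2/(4*τ)) * n.factorial) := by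
            gcongr
        _ = n.factorial := by rw [← mul_assoc, ← Real.exp_add]; simp
    have h2 : (4 * τ / x ^ 2)^n = ((x^2/(4*τ))^n)⁻¹ := by
      rw [← inv_pow]; congr 1; rw [inv_div]
    rw [h2, ← div_eq_mul_inv]
    exact (le_div_iff₀ h3).mpr h4
  have hrw : Real.exp (-τ - x^2/(4*τ)) = Real.exp (-τ) * Real.exp (-(x^2/(4*τ))) := by
    rw [← Real.exp_add]; ring_nf
  have hnn : (0:ℝ) ≤ ↑n.factorial * (4/x^2)^n * (Real.exp (-τ) * τ ^ ((n:ℝ)-ν-1)) := by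
    have := Real.rpow_nonneg hτ.le ((n:ℝ)-ν-1); positivity
  rw [norm_mul, Real.norm_eq_abs, Real.norm_eq_abs, abs_of_nonneg (Real.rpow_nonneg hτ.le _),
    abs_of_nonneg (Real.exp_pos _).le, hrw, Real.norm_eq_abs, abs_of_nonneg hnn]
  calc τ ^ (-(ν+1)) * (Real.exp (-τ) * Real.exp (-(x^2/(4*τ))))
      ≤ τ ^ (-(ν+1)) * (Real.exp (-τ) * (n.factorial * (4*τ/x^2)^n)) := by
        have := Real.rpow_nonneg hτ.le (-(ν+1)); gcongr
    _ = ↑n.factorial * (4/x^2)^n * (Real.exp (-τ) * τ ^ ((n:ℝ)-ν-1)) := by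
        rw [show ((n:ℝ)-ν)-1 = (n:ℝ) + (-(ν+1)) by ring, Real.rpow_add hτ, Real.rpow_natCast,
          div_pow, mul_pow, div_pow]
        ring


lemma key_eq (ν x : ℝ) {s t : ℝ} (hs : 0 < s) (ht : 0 < t) :
    (t ^ (ν+1) * Real.exp t) * ((s+t) ^ (-(ν+1)) * Real.exp (-(s+t) - x^2/(4*(s+t)))) =
    ((s+t)/t) ^ (-(ν+1)) * Real.exp (-s) * Real.exp (-(x^2/(4*(s+t)))) := by
  have h1 : ((s+t)/t) ^ (-(ν+1)) = (s+t) ^ (-(ν+1)) * t ^ (ν+1) := by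
    rw [Real.div_rpow (by positivity) ht.le, Real.rpow_neg ht.le (ν+1), div_eq_mul_inv, inv_inv]
  have h2 : Real.exp t * Real.exp (-(s+t) - x^2/(4*(s+t)))
      = Real.exp (-s) * Real.exp (-(x^2/(4*(s+t)))) := by
    rw [← Real.exp_add, ← Real.exp_add]; congr 1; ring
  calc (t ^ (ν+1) * Real.exp t) * ((s+t) ^ (-(ν+1)) * Real.exp (-(s+t) - x^2/(4*(s+t))))
      = ((s+t) ^ (-(ν+1)) * t ^ (ν+1)) * (Real.exp t * Real.exp (-(s+t) - x^2/(4*(s+t)))) := by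
        ring
    _ = _ := by rw [h2, ← h1]; ring

lemma main_limit (ν x : ℝ) (hx : 0 < x) :
    Tendsto (fun t : ℝ => t ^ (ν+1) * Real.exp t *
      ∫ τ in Ioi t, τ ^ (-(ν+1)) * Real.exp (-τ - x^2 / (4*τ))) atTop (nhds 1) := by
  set c := |ν + 1| with hc
  have hc0 : 0 ≤ c := abs_nonneg _
  -- DCT
  have hDCT : Tendsto (fun t : ℝ => ∫ s in Ioi (0:ℝ),
      (t ^ (ν+1) * Real.exp t) * ((s+t) ^ (-(ν+1)) * Real.exp (-(s+t) - x^2/(4*(s+t)))))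
      atTop (nhds (∫ s in Ioi (0:ℝ), Real.exp (-s))) := by
    apply tendsto_integral_filter_of_dominated_convergence
      (bound := fun s => 2^c * Real.exp (-s) + 2^c * (s ^ c * Real.exp (-s)))
    · filter_upwards with t
      apply Measurable.aestronglyMeasurable
      fun_prop
    · filter_upwards [eventually_ge_atTop (1:ℝ)] with t ht
      filter_upwards [ae_restrict_mem measurableSet_Ioi] with s (hs : 0 < s)
      have ht0 : (0:ℝ) < t := lt_of_lt_of_le one_pos ht
      rw [key_eq ν x hs ht0]
      have hA1 : 1 ≤ (s+t)/t := (one_le_div ht0).mpr (by linarith)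
      have hA2 : (s+t)/t ≤ 1 + s := by
        rw [div_le_iff₀ ht0]; nlinarith
      have hAb : ((s+t)/t) ^ (-(ν+1)) ≤ (1+s) ^ c :=
        le_trans (Real.rpow_le_rpow_of_exponent_le hA1 (neg_le_abs _))
          (Real.rpow_le_rpow (by positivity) hA2 hc0)
      have hBb : (1+s) ^ c ≤ 2^c + 2^c * s^c := by
        rcases le_total s 1 with h | h
        · have : (1+s) ^ c ≤ (2:ℝ)^c :=
            Real.rpow_le_rpow (by positivity) (by linarith) hc0
          have hs' : 0 ≤ s^c := Real.rpow_nonneg hs.le c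
          have h3 : (0:ℝ) ≤ 2^c := Real.rpow_nonneg (by norm_num) c
          nlinarith [mul_nonneg h3 hs']
        · have h1 : (1+s) ^ c ≤ (2*s) ^ c :=
            Real.rpow_le_rpow (by positivity) (by linarith) hc0
          have h2 : ((2:ℝ)*s) ^ c = 2^c * s^c :=
            Real.mul_rpow (by norm_num) hs.le
          have h3 : (0:ℝ) ≤ 2^c := Real.rpow_nonneg (by norm_num) c
          nlinarith
      have hexp1 : Real.exp (-(x^2/(4*(s+t)))) ≤ 1 := by
        rw [Real.exp_le_one_iff]; exact neg_nonpos.mpr (by positivity)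
      have hApos : (0:ℝ) ≤ ((s+t)/t) ^ (-(ν+1)) := Real.rpow_nonneg (by positivity) _
      rw [Real.norm_eq_abs, abs_of_nonneg (by positivity)]
      calc ((s+t)/t) ^ (-(ν+1)) * Real.exp (-s) * Real.exp (-(x^2/(4*(s+t))))
          ≤ (2^c + 2^c * s^c) * Real.exp (-s) * 1 := by
            gcongr
            exact hAb.trans hBb
        _ = 2^c * Real.exp (-s) + 2^c * (s ^ c * Real.exp (-s)) := by ring
    · have h1 : IntegrableOn (fun s : ℝ => Real.exp (-s)) (Ioi 0) :=
        IntegrableOn.congr_fun (exp_neg_integrableOn_Ioi 0 one_pos)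
          (fun s _ => by norm_num) measurableSet_Ioi
      have h1' : IntegrableOn (fun s : ℝ => 2^c * Real.exp (-s)) (Ioi 0) :=
        h1.const_mul ((2:ℝ)^c)
      have h2 : IntegrableOn (fun s : ℝ => Real.exp (-s) * s ^ (c+1-1)) (Ioi 0) :=
        Real.GammaIntegral_convergent (show 0 < c + 1 by linarith)
      have h2' : IntegrableOn (fun s : ℝ => 2^c * (s ^ c * Real.exp (-s))) (Ioi 0) := by
        refine IntegrableOn.congr_fun (h2.const_mul ((2:ℝ)^c)) (fun s _ => ?_) measurableSet_Ioi
        simp only [add_sub_cancel_right]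
        ring
      exact h1'.add h2'
    · filter_upwards [ae_restrict_mem measurableSet_Ioi] with s (hs : 0 < s)
      have f1 : Tendsto (fun t : ℝ => (s+t)/t) atTop (nhds 1) := by
        have h0 : Tendsto (fun t : ℝ => s/t + 1) atTop (nhds (0 + 1)) :=
          (Tendsto.div_atTop tendsto_const_nhds tendsto_id).add tendsto_const_nhds
        rw [zero_add] at h0
        apply h0.congr'
        filter_upwards [eventually_gt_atTop (0:ℝ)] with t ht
        field_simp
      have g1 : Tendsto (fun t : ℝ => ((s+t)/t) ^ (-(ν+1))) atTop (nhds 1) := by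
        have := ((Real.continuousAt_rpow_const 1 (-(ν+1)) (Or.inl one_ne_zero)).tendsto).comp f1
        simpa [Function.comp_def] using this
      have g3 : Tendsto (fun t : ℝ => Real.exp (-(x^2/(4*(s+t))))) atTop (nhds 1) := by
        have h4 : Tendsto (fun t : ℝ => x^2/(4*(s+t))) atTop (nhds 0) := by
          apply Tendsto.div_atTop tendsto_const_nhds
          apply Tendsto.const_mul_atTop (by norm_num : (0:ℝ) < 4)
          exact tendsto_atTop_add_const_left _ s tendsto_id
        have h5 : Tendsto (fun t : ℝ => -(x^2/(4*(s+t)))) atTop (nhds 0) := by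
          simpa using h4.neg
        have := (Real.continuous_exp.tendsto 0).comp h5
        simpa [Function.comp_def] using this
      have := (g1.mul (tendsto_const_nhds (x := Real.exp (-s)))).mul g3
      rw [one_mul, mul_one] at this
      apply this.congr'
      filter_upwards [eventually_gt_atTop (0:ℝ)] with t ht
      exact (key_eq ν x hs ht).symm
  have hval : (∫ s in Ioi (0:ℝ), Real.exp (-s)) = 1 := integral_exp_neg_Ioi_zero
  rw [hval] at hDCT
  apply hDCT.congr'
  filter_upwards [eventually_gt_atTop (0:ℝ)] with t ht
  have hpre : (fun s : ℝ => s + t) ⁻¹' (Ioi t) = Ioi 0 := by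
    ext s; simp
  have htr := (measurePreserving_add_right volume t).setIntegral_preimage_emb
    (measurableEmbedding_addRight t)
    (fun τ : ℝ => τ ^ (-(ν+1)) * Real.exp (-τ - x^2 / (4*τ))) (Ioi t)
  rw [hpre] at htr
  rw [← htr, ← integral_const_mul]

lemma macdonald_sub_shu (ν x : ℝ) (hx : 0 < x) {t : ℝ} (ht : 0 < t) :
    macdonald ν x - shu ν x t
      = (1/2) * (x/2) ^ ν * ∫ τ in Ioi t, τ ^ (-(ν+1)) * Real.exp (-τ - x^2 / (4*τ)) := by
  have hInt := shu_integrable ν x hx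
  have hsplit : (∫ τ in Ioi (0:ℝ), τ ^ (-(ν+1)) * Real.exp (-τ - x^2 / (4*τ)))
      = (∫ τ in Ioc (0:ℝ) t, τ ^ (-(ν+1)) * Real.exp (-τ - x^2 / (4*τ)))
        + ∫ τ in Ioi t, τ ^ (-(ν+1)) * Real.exp (-τ - x^2 / (4*τ)) := by
    rw [← Ioc_union_Ioi_eq_Ioi ht.le]
    exact setIntegral_union (Ioc_disjoint_Ioi le_rfl) measurableSet_Ioi
      (hInt.mono_set Ioc_subset_Ioi_self) (hInt.mono_set (Ioi_subset_Ioi ht.le))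
  rw [macdonald, shu, intervalIntegral.integral_of_le ht.le, hsplit]
  ring

end Aux

theorem stmt_15 (ν x : ℝ) (hx : 0 < x) :
    Tendsto (fun t : ℝ => t ^ (ν+1) * Real.exp t * (macdonald ν x - shu ν x t))
        atTop (nhds ((1/2) * (x/2) ^ ν)) ∧
    Tendsto (fun t : ℝ => shu ν x t) atTop (nhds (macdonald ν x)) := by
  have hML := main_limit ν x hx
  have h1 : Tendsto (fun t : ℝ => t ^ (ν+1) * Real.exp t * (macdonald ν x - shu ν x t)) atTop
      (nhds ((1/2) * (x/2) ^ ν)) := by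
    have h := hML.const_mul ((1/2) * (x/2) ^ ν)
    rw [mul_one] at h
    apply h.congr'
    filter_upwards [eventually_gt_atTop (0:ℝ)] with t ht
    rw [macdonald_sub_shu ν x hx ht]
    ring
  refine ⟨h1, ?_⟩
  have h0 : Tendsto (fun t : ℝ => (t ^ (ν+1) * Real.exp t)⁻¹) atTop (nhds 0) := by
    apply Tendsto.inv_tendsto_atTop
    apply (tendsto_exp_div_rpow_atTop (-(ν+1))).congr'
    filter_upwards [eventually_gt_atTop (0:ℝ)] with t ht
    rw [Real.rpow_neg ht.le, div_eq_mul_inv, inv_inv, mul_comm]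
  have h2 : Tendsto (fun t : ℝ => macdonald ν x - shu ν x t) atTop (nhds 0) := by
    have h := h1.mul h0
    rw [mul_zero] at h
    apply h.congr'
    filter_upwards [eventually_gt_atTop (0:ℝ)] with t ht
    have hne : t ^ (ν+1) * Real.exp t ≠ 0 := by positivity
    field_simp
  have h3 := (tendsto_const_nhds (x := macdonald ν x) (f := atTop)).sub h2
  rw [sub_zero] at h3
  exact h3.congr (fun t => by ring)
end

section
/- For every real ν and every fixed t > 0, the Shu function has the leading-order behavior S_ν(x,t) ~ x^ν · exp(-x²/(4t) - t) / ( (2t)^{ν-1} · (x² - 4t²) ) as x → +∞; that is, the ratio S_ν(x,t) · (2t)^{ν-1} · (x² - 4t²) · exp(x²/(4t) + t) / x^ν tends to 1 as x tends to +∞. -/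
open Real MeasureTheory Filter Topology

lemma my_min_le_rpow {u v τ q : ℝ} (hu : 0 < u) (h1 : u ≤ τ) (h2 : τ ≤ v) :
    min (u ^ q) (v ^ q) ≤ τ ^ q := by
  rcases le_or_gt 0 q with hq | hq
  · exact (min_le_left _ _).trans (Real.rpow_le_rpow hu.le h1 hq)
  · exact (min_le_right _ _).trans (Real.rpow_le_rpow_of_nonpos (hu.trans_le h1) h2 hq.le)

lemma my_rpow_le_max {u v τ q : ℝ} (hu : 0 < u) (h1 : u ≤ τ) (h2 : τ ≤ v) :
    τ ^ q ≤ max (u ^ q) (v ^ q) := by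
  rcases le_or_gt 0 q with hq | hq
  · exact (Real.rpow_le_rpow (hu.le.trans h1) h2 hq).trans (le_max_right _ _)
  · exact (Real.rpow_le_rpow_of_nonpos hu h1 hq.le).trans (le_max_left _ _)

lemma my_exp_neg_le (n : ℕ) {y : ℝ} (hy : 0 < y) : Real.exp (-y) ≤ (Nat.factorial n : ℝ) / y ^ n := by
  rw [Real.exp_neg, inv_le_iff_one_le_mul₀ (Real.exp_pos y), ← div_le_iff₀' (by positivity : (0:ℝ) < (Nat.factorial n : ℝ) / y ^ n)]
  calc (1 : ℝ) / ((Nat.factorial n : ℝ) / y ^ n) = y ^ n / (Nat.factorial n : ℝ) := by field_simp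
  _ ≤ Real.exp y := Real.pow_div_factorial_le_exp y hy.le n

-- pointwise-times-exponential tail kill:  τ^(-(ν+1)) * exp(-c/τ) ≤ n! * t^(n-(ν+1)) / c^n
lemma my_rpow_exp_bound (ν t : ℝ) (ht : 0 < t) {τ c : ℝ} (hτ : 0 < τ) (hτt : τ ≤ t) (hc : 0 < c) :
    τ ^ (-(ν+1)) * Real.exp (-(c/τ)) ≤
      (Nat.factorial ⌈ν+1⌉₊ : ℝ) * t ^ (-(ν+1) + (⌈ν+1⌉₊ : ℝ)) / c ^ ⌈ν+1⌉₊ := by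
  set n := ⌈ν+1⌉₊ with hn
  have hne : (ν+1) ≤ (n:ℝ) := Nat.le_ceil _
  have h1 : Real.exp (-(c/τ)) ≤ (Nat.factorial n : ℝ) / (c/τ) ^ n :=
    my_exp_neg_le n (by positivity)
  have h2 : τ ^ (-(ν+1)) * ((Nat.factorial n : ℝ) / (c/τ) ^ n)
      = (Nat.factorial n : ℝ) * (τ ^ (-(ν+1)) * τ ^ (n:ℝ)) / c ^ n := by
    rw [div_pow, Real.rpow_natCast τ n]
    field_simp
  have h3 : τ ^ (-(ν+1)) * τ ^ (n:ℝ) = τ ^ (-(ν+1) + (n:ℝ)) := (Real.rpow_add hτ _ _).symm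
  have h4 : τ ^ (-(ν+1) + (n:ℝ)) ≤ t ^ (-(ν+1) + (n:ℝ)) :=
    Real.rpow_le_rpow hτ.le hτt (by linarith)
  calc τ ^ (-(ν+1)) * Real.exp (-(c/τ))
      ≤ τ ^ (-(ν+1)) * ((Nat.factorial n : ℝ) / (c/τ) ^ n) := by
        apply mul_le_mul_of_nonneg_left h1 (Real.rpow_nonneg hτ.le _)
    _ = (Nat.factorial n : ℝ) * (τ ^ (-(ν+1) + (n:ℝ))) / c ^ n := by rw [h2, h3]
    _ ≤ (Nat.factorial n : ℝ) * t ^ (-(ν+1) + (n:ℝ)) / c ^ n := by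
        apply div_le_div_of_nonneg_right ?_ (by positivity)
        · exact mul_le_mul_of_nonneg_left h4 (by positivity)

lemma my_meas (ν t x : ℝ) :
    Measurable (fun τ : ℝ => τ ^ (-(ν+1)) * Real.exp (-((t-τ) * (x^2/(4*t*τ) - 1)))) := by
  fun_prop

lemma my_integrableOn (ν t x : ℝ) (ht : 0 < t) (hx : 3*t ≤ x) (h3 : 3 ≤ x) :
    IntegrableOn (fun τ : ℝ => τ ^ (-(ν+1)) * Real.exp (-((t-τ) * (x^2/(4*t*τ) - 1))))
      (Set.Ioc 0 t) := by
  have hx0 : 0 < x := lt_of_lt_of_le (by norm_num) h3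
  set K : ℝ := max (Real.exp t * ((Nat.factorial ⌈ν+1⌉₊ : ℝ) * t ^ (-(ν+1) + (⌈ν+1⌉₊ : ℝ)) / (x^2/8) ^ ⌈ν+1⌉₊))
      (max ((t/2) ^ (-(ν+1))) (t ^ (-(ν+1)))) with hK
  apply Measure.integrableOn_of_bounded (M := K) (by simp [Real.volume_Ioc])
    (my_meas ν t x).aestronglyMeasurable
  rw [ae_restrict_iff' measurableSet_Ioc]
  refine ae_of_all _ (fun τ hτ => ?_)
  obtain ⟨hτ0, hτt⟩ := hτ
  have hg0 : (0:ℝ) ≤ τ ^ (-(ν+1)) * Real.exp (-((t-τ) * (x^2/(4*t*τ) - 1))) := by positivity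
  rw [Real.norm_eq_abs, abs_of_nonneg hg0]
  rcases le_or_gt τ (t/2) with hcase | hcase
  · -- small τ: exponential kills
    have hψ : x^2/(8*τ) - t ≤ (t-τ) * (x^2/(4*t*τ) - 1) := by
      have h1 : t/2 ≤ t - τ := by linarith
      have h2 : x^2/(8*τ) = (t/2) * (x^2/(4*t*τ)) := by field_simp; ring
      have h3' : (t/2) * (x^2/(4*t*τ)) ≤ (t-τ) * (x^2/(4*t*τ)) := by
        apply mul_le_mul_of_nonneg_right h1 (by positivity)
      nlinarith [mul_le_mul_of_nonneg_right h1 (le_of_lt (show (0:ℝ) < x^2/(4*t*τ) by positivity))]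
    have hexp : Real.exp (-((t-τ) * (x^2/(4*t*τ) - 1))) ≤ Real.exp t * Real.exp (-((x^2/8)/τ)) := by
      rw [← Real.exp_add]
      apply Real.exp_le_exp.2
      have : (x^2/8)/τ = x^2/(8*τ) := by ring
      rw [this]; linarith
    calc τ ^ (-(ν+1)) * Real.exp (-((t-τ) * (x^2/(4*t*τ) - 1)))
        ≤ τ ^ (-(ν+1)) * (Real.exp t * Real.exp (-((x^2/8)/τ))) := by
          apply mul_le_mul_of_nonneg_left hexp (Real.rpow_nonneg hτ0.le _)
      _ = Real.exp t * (τ ^ (-(ν+1)) * Real.exp (-((x^2/8)/τ))) := by ring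
      _ ≤ Real.exp t * ((Nat.factorial ⌈ν+1⌉₊ : ℝ) * t ^ (-(ν+1) + (⌈ν+1⌉₊ : ℝ)) / (x^2/8) ^ ⌈ν+1⌉₊) := by
          apply mul_le_mul_of_nonneg_left
            (my_rpow_exp_bound ν t ht hτ0 hτt (by positivity)) (Real.exp_pos t).le
      _ ≤ K := le_max_left _ _
  · -- big τ: exponent nonpositive
    have hψ0 : 0 ≤ (t-τ) * (x^2/(4*t*τ) - 1) := by
      apply mul_nonneg (by linarith)
      have : 4*t*τ ≤ x^2 := by nlinarith
      rw [sub_nonneg, le_div_iff₀ (by positivity)]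
      linarith
    calc τ ^ (-(ν+1)) * Real.exp (-((t-τ) * (x^2/(4*t*τ) - 1)))
        ≤ τ ^ (-(ν+1)) * 1 := by
          apply mul_le_mul_of_nonneg_left ?_ (Real.rpow_nonneg hτ0.le _)
          rw [Real.exp_le_one_iff]; linarith
      _ = τ ^ (-(ν+1)) := mul_one _
      _ ≤ max ((t/2) ^ (-(ν+1))) (t ^ (-(ν+1))) := my_rpow_le_max (by positivity) hcase.le hτt
      _ ≤ K := le_max_right _ _

lemma my_int_exp (c d A B' : ℝ) (hc : c ≠ 0) :
    ∫ τ in A..B', Real.exp (c*τ + d) = (Real.exp (c*B'+d) - Real.exp (c*A+d))/c := by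
  have hF : ∀ τ ∈ Set.uIcc A B', HasDerivAt (fun s => Real.exp (c*s + d)/c)
      (Real.exp (c*τ + d)) τ := by
    intro τ _
    have h1 : HasDerivAt (fun s : ℝ => c*s + d) c τ := by
      simpa using ((hasDerivAt_id τ).const_mul c).add_const d
    have := (h1.exp).div_const c
    simpa [mul_div_assoc, mul_comm, mul_div_cancel_left₀ _ hc] using this
  rw [intervalIntegral.integral_eq_sub_of_hasDerivAt hF
    ((Real.continuous_exp.comp (by continuity)).intervalIntegrable A B')]
  ring

-- tail pointwise bound
lemma my_tail_ptwise (ν t x : ℝ) (ht : 0 < t) (hx : 3*t ≤ x) (h3 : 3 ≤ x)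
    {τ : ℝ} (hτ : τ ∈ Set.Ioc 0 (t - t^2/x)) :
    τ ^ (-(ν+1)) * Real.exp (-((t-τ) * (x^2/(4*t*τ) - 1))) ≤
      Real.exp t * ((Nat.factorial ⌈ν+1⌉₊ : ℝ) * t ^ (-(ν+1) + (⌈ν+1⌉₊ : ℝ)) / (t*x/8) ^ ⌈ν+1⌉₊)
        * Real.exp (-(x/8)) := by
  obtain ⟨hτ0, hτe⟩ := hτ
  have hx0 : (0:ℝ) < x := lt_of_lt_of_le (by norm_num) h3
  have hδ0 : (0:ℝ) < t^2/x := by positivity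
  have hδt : t^2/x ≤ t := by
    rw [div_le_iff₀ hx0]; nlinarith
  have hτt : τ ≤ t := by linarith
  have hψ : (t*x/8)/τ + x/8 - t ≤ (t-τ) * (x^2/(4*t*τ) - 1) := by
    have hF0 : (0:ℝ) ≤ x^2/(4*t*τ) - 1 := by
      rw [sub_nonneg, le_div_iff₀ (by positivity)]
      nlinarith
    have h1 : (t^2/x) * (x^2/(4*t*τ) - 1) ≤ (t-τ) * (x^2/(4*t*τ) - 1) := by
      apply mul_le_mul_of_nonneg_right (by linarith) hF0
    have h2 : (t^2/x) * (x^2/(4*t*τ)) = (t*x/4)/τ := by field_simp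
    have h3' : (t*x/8)/τ + (t*x/8)/τ = (t*x/4)/τ := by ring
    have h4 : x/8 ≤ (t*x/8)/τ := by
      rw [le_div_iff₀ hτ0]
      calc x/8 * τ ≤ x/8 * t := by
            apply mul_le_mul_of_nonneg_left hτt (by positivity)
        _ = t*x/8 := by ring
    nlinarith
  have hexp : Real.exp (-((t-τ) * (x^2/(4*t*τ) - 1))) ≤
      Real.exp t * Real.exp (-((t*x/8)/τ)) * Real.exp (-(x/8)) := by
    rw [← Real.exp_add, ← Real.exp_add]
    apply Real.exp_le_exp.2
    linarith
  calc τ ^ (-(ν+1)) * Real.exp (-((t-τ) * (x^2/(4*t*τ) - 1)))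
      ≤ τ ^ (-(ν+1)) * (Real.exp t * Real.exp (-((t*x/8)/τ)) * Real.exp (-(x/8))) :=
        mul_le_mul_of_nonneg_left hexp (Real.rpow_nonneg hτ0.le _)
    _ = Real.exp t * (τ ^ (-(ν+1)) * Real.exp (-((t*x/8)/τ))) * Real.exp (-(x/8)) := by ring
    _ ≤ Real.exp t * ((Nat.factorial ⌈ν+1⌉₊ : ℝ) * t ^ (-(ν+1) + (⌈ν+1⌉₊ : ℝ)) / (t*x/8) ^ ⌈ν+1⌉₊)
        * Real.exp (-(x/8)) := by
        apply mul_le_mul_of_nonneg_right ?_ (Real.exp_pos _).le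
        exact mul_le_mul_of_nonneg_left
          (my_rpow_exp_bound ν t ht hτ0 hτt (by positivity)) (Real.exp_pos t).le

-- main interval upper bound
lemma my_main_upper (ν t x : ℝ) (ht : 0 < t) (hx : 3*t ≤ x) (h3 : 3 ≤ x)
    {τ : ℝ} (hτ : τ ∈ Set.Ioc (t - t^2/x) t) :
    τ ^ (-(ν+1)) * Real.exp (-((t-τ) * (x^2/(4*t*τ) - 1))) ≤
      (max ((t - t^2/x) ^ (-(ν+1))) (t ^ (-(ν+1)))) *
        Real.exp ((x^2/(4*t^2) - 1)*τ + (-((x^2/(4*t^2) - 1)*t))) := by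
  obtain ⟨hτl, hτt⟩ := hτ
  have hx0 : (0:ℝ) < x := lt_of_lt_of_le (by norm_num) h3
  have hδt : t^2/x ≤ t/3 := by
    rw [div_le_div_iff₀ hx0 (by norm_num)]; nlinarith
  have hul : (0:ℝ) < t - t^2/x := by linarith
  have hτ0 : (0:ℝ) < τ := lt_trans hul hτl
  have hψ : (x^2/(4*t^2) - 1) * (t - τ) ≤ (t-τ) * (x^2/(4*t*τ) - 1) := by
    have h1 : x^2/(4*t^2) ≤ x^2/(4*t*τ) := by
      apply div_le_div_of_nonneg_left (by positivity) (by positivity)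
      nlinarith
    nlinarith [sub_nonneg.2 hτt]
  calc τ ^ (-(ν+1)) * Real.exp (-((t-τ) * (x^2/(4*t*τ) - 1)))
      ≤ (max ((t - t^2/x) ^ (-(ν+1))) (t ^ (-(ν+1)))) *
          Real.exp (-((t-τ) * (x^2/(4*t*τ) - 1))) := by
        exact mul_le_mul_of_nonneg_right (my_rpow_le_max hul hτl.le hτt) (Real.exp_pos _).le
    _ ≤ _ := by
        apply mul_le_mul_of_nonneg_left ?_ (le_max_of_le_right (Real.rpow_nonneg ht.le _))
        apply Real.exp_le_exp.2
        nlinarith [hψ]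

-- main interval lower bound
lemma my_main_lower (ν t x : ℝ) (ht : 0 < t) (hx : 3*t ≤ x) (h3 : 3 ≤ x)
    {τ : ℝ} (hτ : τ ∈ Set.Ioc (t - t^2/x) t) :
    (min ((t - t^2/x) ^ (-(ν+1))) (t ^ (-(ν+1)))) *
        Real.exp ((x^2/(4*t*(t - t^2/x)) - 1)*τ + (-((x^2/(4*t*(t - t^2/x)) - 1)*t))) ≤
      τ ^ (-(ν+1)) * Real.exp (-((t-τ) * (x^2/(4*t*τ) - 1))) := by
  obtain ⟨hτl, hτt⟩ := hτ
  have hx0 : (0:ℝ) < x := lt_of_lt_of_le (by norm_num) h3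
  have hδt : t^2/x ≤ t/3 := by
    rw [div_le_div_iff₀ hx0 (by norm_num)]; nlinarith
  have hul : (0:ℝ) < t - t^2/x := by linarith
  have hτ0 : (0:ℝ) < τ := lt_trans hul hτl
  have hψ : (t-τ) * (x^2/(4*t*τ) - 1) ≤ (x^2/(4*t*(t - t^2/x)) - 1) * (t - τ) := by
    have h1 : x^2/(4*t*τ) ≤ x^2/(4*t*(t - t^2/x)) := by
      apply div_le_div_of_nonneg_left (by positivity) (by positivity)
      nlinarith
    nlinarith [sub_nonneg.2 hτt]
  apply mul_le_mul (my_min_le_rpow hul hτl.le hτt) ?_ (Real.exp_pos _).le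
    (Real.rpow_nonneg hτ0.le _)
  apply Real.exp_le_exp.2
  nlinarith [hψ]

lemma my_upper (ν t x : ℝ) (ht : 0 < t) (hx : 3*t ≤ x) (h3 : 3 ≤ x) :
    (x^2-4*t^2) * (∫ τ in Set.Ioc (0:ℝ) t,
        τ ^ (-(ν+1)) * Real.exp (-((t-τ) * (x^2/(4*t*τ) - 1)))) ≤
      4*t^2*(x^2/(4*t^2)-1) *
        (t * (Real.exp t * ((Nat.factorial ⌈ν+1⌉₊ : ℝ) * t ^ (-(ν+1) + (⌈ν+1⌉₊ : ℝ)) / (t*x/8) ^ ⌈ν+1⌉₊)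
          * Real.exp (-(x/8))))
      + 4*t^2 * (max ((t - t^2/x) ^ (-(ν+1))) (t ^ (-(ν+1)))) *
          (1 - Real.exp (-((x^2/(4*t^2)-1) * (t^2/x)))) := by
  have hx0 : (0:ℝ) < x := lt_of_lt_of_le (by norm_num) h3
  set a : ℝ := x^2/(4*t^2)-1 with ha
  set δ : ℝ := t^2/x with hδ
  set B : ℝ := Real.exp t * ((Nat.factorial ⌈ν+1⌉₊ : ℝ) * t ^ (-(ν+1) + (⌈ν+1⌉₊ : ℝ)) / (t*x/8) ^ ⌈ν+1⌉₊)
          * Real.exp (-(x/8)) with hB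
  set M : ℝ := max ((t - t^2/x) ^ (-(ν+1))) (t ^ (-(ν+1))) with hM
  have hδ0 : (0:ℝ) < δ := by positivity
  have hδt : δ ≤ t/3 := by
    rw [hδ, div_le_div_iff₀ hx0 (by norm_num)]; nlinarith
  have hul : (0:ℝ) < t - δ := by linarith
  have ha54 : (5/4:ℝ) ≤ a := by
    rw [ha, le_sub_iff_add_le, le_div_iff₀ (by positivity)]
    nlinarith
  have ha0 : (0:ℝ) < a := lt_of_lt_of_le (by norm_num) ha54
  have hint : IntegrableOn (fun τ : ℝ => τ ^ (-(ν+1)) * Real.exp (-((t-τ) * (x^2/(4*t*τ) - 1))))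
      (Set.Ioc 0 t) := my_integrableOn ν t x ht hx h3
  have hint1 := hint.mono_set (Set.Ioc_subset_Ioc_right (by linarith : t - δ ≤ t))
  have hint2 := hint.mono_set (Set.Ioc_subset_Ioc_left hul.le)
  have hsplit : (∫ τ in Set.Ioc (0:ℝ) t,
        τ ^ (-(ν+1)) * Real.exp (-((t-τ) * (x^2/(4*t*τ) - 1))))
      = (∫ τ in Set.Ioc (0:ℝ) (t-δ), τ ^ (-(ν+1)) * Real.exp (-((t-τ) * (x^2/(4*t*τ) - 1))))
      + (∫ τ in Set.Ioc (t-δ) t, τ ^ (-(ν+1)) * Real.exp (-((t-τ) * (x^2/(4*t*τ) - 1)))) := by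
    rw [← MeasureTheory.setIntegral_union (Set.Ioc_disjoint_Ioc_of_le le_rfl) measurableSet_Ioc hint1 hint2,
      Set.Ioc_union_Ioc_eq_Ioc hul.le (by linarith : t - δ ≤ t)]
  have hB0 : (0:ℝ) ≤ B := by positivity
  have htail : (∫ τ in Set.Ioc (0:ℝ) (t-δ),
        τ ^ (-(ν+1)) * Real.exp (-((t-τ) * (x^2/(4*t*τ) - 1)))) ≤ t * B := by
    calc (∫ τ in Set.Ioc (0:ℝ) (t-δ), τ ^ (-(ν+1)) * Real.exp (-((t-τ) * (x^2/(4*t*τ) - 1))))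
        ≤ ∫ _ in Set.Ioc (0:ℝ) (t-δ), B := by
          apply MeasureTheory.setIntegral_mono_on hint1 (integrableOn_const (by
            simp [Real.volume_Ioc])) measurableSet_Ioc
          exact fun τ hτ => my_tail_ptwise ν t x ht hx h3 hτ
      _ = (t - δ - 0) * B := by
          rw [MeasureTheory.setIntegral_const, Real.volume_real_Ioc_of_le (by linarith), smul_eq_mul]
      _ ≤ t * B := by
          apply mul_le_mul_of_nonneg_right (by linarith) hB0
  have hmain : (∫ τ in Set.Ioc (t-δ) t, τ ^ (-(ν+1)) * Real.exp (-((t-τ) * (x^2/(4*t*τ) - 1))))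
      ≤ M * ((1 - Real.exp (-(a * δ)))/a) := by
    calc (∫ τ in Set.Ioc (t-δ) t, τ ^ (-(ν+1)) * Real.exp (-((t-τ) * (x^2/(4*t*τ) - 1))))
        ≤ ∫ τ in Set.Ioc (t-δ) t, M * Real.exp (a*τ + (-(a*t))) := by
          apply MeasureTheory.setIntegral_mono_on hint2 ?_ measurableSet_Ioc
          · exact fun τ hτ => my_main_upper ν t x ht hx h3 hτ
          · apply Continuous.integrableOn_Ioc
            exact continuous_const.mul (Real.continuous_exp.comp
              ((continuous_const.mul continuous_id).add continuous_const))
      _ = M * ∫ τ in Set.Ioc (t-δ) t, Real.exp (a*τ + (-(a*t))) := by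
          rw [MeasureTheory.integral_const_mul]
      _ = M * ((1 - Real.exp (-(a * δ)))/a) := by
          rw [← intervalIntegral.integral_of_le (by linarith : t - δ ≤ t),
            my_int_exp a (-(a*t)) (t-δ) t (ne_of_gt ha0)]
          rw [show a*t + -(a*t) = 0 by ring, show a*(t-δ) + -(a*t) = -(a*δ) by ring,
            Real.exp_zero]
  have hMnn : (0:ℝ) ≤ M := le_max_of_le_right (Real.rpow_nonneg ht.le _)
  have hfact : x^2 - 4*t^2 = 4*t^2*a := by
    rw [ha]; field_simp
  rw [hfact, hsplit]
  have h2 : 4*t^2*a * (M * ((1 - Real.exp (-(a * δ)))/a)) = 4*t^2 * M * (1 - Real.exp (-(a*δ))) := by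
    field_simp
  calc 4*t^2*a * ((∫ τ in Set.Ioc (0:ℝ) (t-δ), τ ^ (-(ν+1)) * Real.exp (-((t-τ) * (x^2/(4*t*τ) - 1))))
      + (∫ τ in Set.Ioc (t-δ) t, τ ^ (-(ν+1)) * Real.exp (-((t-τ) * (x^2/(4*t*τ) - 1)))))
      ≤ 4*t^2*a * ((t*B) + M * ((1 - Real.exp (-(a * δ)))/a)) := by
        apply mul_le_mul_of_nonneg_left (add_le_add htail hmain) (by positivity)
    _ = 4*t^2*a * (t*B) + 4*t^2 * M * (1 - Real.exp (-(a*δ))) := by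
        rw [mul_add, h2]

lemma my_lower (ν t x : ℝ) (ht : 0 < t) (hx : 3*t ≤ x) (h3 : 3 ≤ x) :
    4*t^2 * (min ((t - t^2/x) ^ (-(ν+1))) (t ^ (-(ν+1)))) *
        ((x^2/(4*t^2)-1) / (x^2/(4*t*(t - t^2/x))-1)) *
        (1 - Real.exp (-((x^2/(4*t*(t - t^2/x))-1) * (t^2/x)))) ≤
      (x^2-4*t^2) * (∫ τ in Set.Ioc (0:ℝ) t,
        τ ^ (-(ν+1)) * Real.exp (-((t-τ) * (x^2/(4*t*τ) - 1)))) := by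
  have hx0 : (0:ℝ) < x := lt_of_lt_of_le (by norm_num) h3
  set a : ℝ := x^2/(4*t^2)-1 with ha
  set δ : ℝ := t^2/x with hδ
  set b : ℝ := x^2/(4*t*(t - t^2/x))-1 with hb
  set m : ℝ := min ((t - t^2/x) ^ (-(ν+1))) (t ^ (-(ν+1))) with hm
  have hδ0 : (0:ℝ) < δ := by positivity
  have hδt : δ ≤ t/3 := by
    rw [hδ, div_le_div_iff₀ hx0 (by norm_num)]; nlinarith
  have hul : (0:ℝ) < t - δ := by linarith
  have ha54 : (5/4:ℝ) ≤ a := by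
    rw [ha, le_sub_iff_add_le, le_div_iff₀ (by positivity)]
    nlinarith
  have ha0 : (0:ℝ) < a := lt_of_lt_of_le (by norm_num) ha54
  have hab : a ≤ b := by
    rw [ha, hb]
    apply sub_le_sub_right
    apply div_le_div_of_nonneg_left (by positivity) (by positivity)
    nlinarith
  have hb0 : (0:ℝ) < b := lt_of_lt_of_le ha0 hab
  have hint : IntegrableOn (fun τ : ℝ => τ ^ (-(ν+1)) * Real.exp (-((t-τ) * (x^2/(4*t*τ) - 1))))
      (Set.Ioc 0 t) := my_integrableOn ν t x ht hx h3
  have hmono : (∫ τ in Set.Ioc (t-δ) t,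
        τ ^ (-(ν+1)) * Real.exp (-((t-τ) * (x^2/(4*t*τ) - 1))))
      ≤ ∫ τ in Set.Ioc (0:ℝ) t, τ ^ (-(ν+1)) * Real.exp (-((t-τ) * (x^2/(4*t*τ) - 1))) := by
    apply MeasureTheory.setIntegral_mono_set hint
    · rw [EventuallyLE, ae_restrict_iff' measurableSet_Ioc]
      refine ae_of_all _ (fun τ hτ => ?_)
      exact mul_nonneg (Real.rpow_nonneg hτ.1.le _) (Real.exp_pos _).le
    · exact HasSubset.Subset.eventuallyLE (Set.Ioc_subset_Ioc_left hul.le)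
  have hmnn : (0:ℝ) ≤ m := le_min (Real.rpow_nonneg hul.le _) (Real.rpow_nonneg ht.le _)
  have hmain : m * ((1 - Real.exp (-(b * δ)))/b) ≤
      (∫ τ in Set.Ioc (t-δ) t, τ ^ (-(ν+1)) * Real.exp (-((t-τ) * (x^2/(4*t*τ) - 1)))) := by
    have heq : m * ((1 - Real.exp (-(b * δ)))/b)
        = ∫ τ in Set.Ioc (t-δ) t, m * Real.exp (b*τ + (-(b*t))) := by
      rw [MeasureTheory.integral_const_mul,
        ← intervalIntegral.integral_of_le (by linarith : t - δ ≤ t),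
        my_int_exp b (-(b*t)) (t-δ) t (ne_of_gt hb0),
        show b*t + -(b*t) = 0 by ring, show b*(t-δ) + -(b*t) = -(b*δ) by ring, Real.exp_zero]
    rw [heq]
    apply MeasureTheory.setIntegral_mono_on ?_
      (hint.mono_set (Set.Ioc_subset_Ioc_left hul.le)) measurableSet_Ioc
    · exact fun τ hτ => my_main_lower ν t x ht hx h3 hτ
    · apply Continuous.integrableOn_Ioc
      exact continuous_const.mul (Real.continuous_exp.comp
        ((continuous_const.mul continuous_id).add continuous_const))
  have hfact : x^2 - 4*t^2 = 4*t^2*a := by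
    rw [ha]; field_simp
  rw [hfact]
  calc 4*t^2 * m * (a/b) * (1 - Real.exp (-(b*δ)))
      = 4*t^2*a * (m * ((1 - Real.exp (-(b * δ)))/b)) := by
        field_simp
    _ ≤ 4*t^2*a * (∫ τ in Set.Ioc (t-δ) t,
          τ ^ (-(ν+1)) * Real.exp (-((t-τ) * (x^2/(4*t*τ) - 1)))) := by
        apply mul_le_mul_of_nonneg_left hmain (by positivity)
    _ ≤ 4*t^2*a * (∫ τ in Set.Ioc (0:ℝ) t,
          τ ^ (-(ν+1)) * Real.exp (-((t-τ) * (x^2/(4*t*τ) - 1)))) := by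
        apply mul_le_mul_of_nonneg_left hmono (by positivity)

lemma core (ν t : ℝ) (ht : 0 < t) :
    Tendsto (fun x : ℝ => (x^2 - 4*t^2) *
        ∫ τ in Set.Ioc (0:ℝ) t, τ ^ (-(ν+1)) * Real.exp (-((t-τ) * (x^2/(4*t*τ) - 1))))
      atTop (𝓝 (4 * t^2 * t ^ (-(ν+1)))) := by
  -- basic limit components
  have hc1 : Tendsto (fun x : ℝ => t - t^2/x) atTop (𝓝 t) := by
    have h0 : Tendsto (fun x : ℝ => t^2/x) atTop (𝓝 0) := by
      simpa [div_eq_mul_inv] using tendsto_inv_atTop_zero.const_mul (t^2)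
    simpa using tendsto_const_nhds.sub h0
  have hrpow : Tendsto (fun x : ℝ => (t - t^2/x) ^ (-(ν+1))) atTop (𝓝 (t ^ (-(ν+1)))) :=
    hc1.rpow_const (Or.inl ht.ne')
  have hm : Tendsto (fun x : ℝ => min ((t - t^2/x) ^ (-(ν+1))) (t ^ (-(ν+1)))) atTop
      (𝓝 (t ^ (-(ν+1)))) := by
    simpa [min_self] using hrpow.min (tendsto_const_nhds (x := t ^ (-(ν+1))))
  have hM : Tendsto (fun x : ℝ => max ((t - t^2/x) ^ (-(ν+1))) (t ^ (-(ν+1)))) atTop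
      (𝓝 (t ^ (-(ν+1)))) := by
    simpa [max_self] using hrpow.max (tendsto_const_nhds (x := t ^ (-(ν+1))))
  -- a*δ → ∞ and b*δ → ∞
  have hx8 : Tendsto (fun x : ℝ => x/8) atTop atTop :=
    Tendsto.atTop_div_const (by norm_num) tendsto_id
  have haδ : Tendsto (fun x : ℝ => (x^2/(4*t^2)-1) * (t^2/x)) atTop atTop := by
    apply tendsto_atTop_mono' _ _ hx8
    filter_upwards [eventually_ge_atTop (3*t), eventually_ge_atTop 3] with x hx h3
    have hx0 : (0:ℝ) < x := lt_of_lt_of_le (by norm_num) h3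
    have key : (x^2/(4*t^2)-1) * (t^2/x) = x/4 - t^2/x := by field_simp
    have h1 : t^2/x ≤ x/8 := by
      rw [div_le_div_iff₀ hx0 (by norm_num)]
      nlinarith [mul_le_mul hx hx (by positivity : (0:ℝ) ≤ 3*t) (le_trans (by positivity) hx)]
    rw [key]
    linarith
  have hbδ : Tendsto (fun x : ℝ => (x^2/(4*t*(t - t^2/x))-1) * (t^2/x)) atTop atTop := by
    apply tendsto_atTop_mono' _ _ haδ
    filter_upwards [eventually_ge_atTop (3*t), eventually_ge_atTop 3] with x hx h3
    have hx0 : (0:ℝ) < x := lt_of_lt_of_le (by norm_num) h3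
    have hδt : t^2/x ≤ t/3 := by
      rw [div_le_div_iff₀ hx0 (by norm_num)]; nlinarith
    have hul : (0:ℝ) < t - t^2/x := by linarith
    apply mul_le_mul_of_nonneg_right _ (by positivity)
    apply sub_le_sub_right
    apply div_le_div_of_nonneg_left (by positivity) (by positivity)
    nlinarith [mul_pos ht (div_pos (by positivity : (0:ℝ) < t^2) hx0)]
  have hexpa : Tendsto (fun x : ℝ => Real.exp (-((x^2/(4*t^2)-1) * (t^2/x)))) atTop (𝓝 0) :=
    Real.tendsto_exp_atBot.comp (tendsto_neg_atTop_atBot.comp haδ)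
  have hexpb : Tendsto (fun x : ℝ => Real.exp (-((x^2/(4*t*(t - t^2/x))-1) * (t^2/x)))) atTop (𝓝 0) :=
    Real.tendsto_exp_atBot.comp (tendsto_neg_atTop_atBot.comp hbδ)
  -- a/b → 1
  have hinvsq : Tendsto (fun x : ℝ => (x^2)⁻¹) atTop (𝓝 0) :=
    tendsto_inv_atTop_zero.comp (tendsto_pow_atTop (by norm_num : 2 ≠ 0))
  have hnum : Tendsto (fun x : ℝ => 1/(4*t^2) - (x^2)⁻¹) atTop (𝓝 (1/(4*t^2))) := by
    simpa using tendsto_const_nhds.sub hinvsq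
  have hden : Tendsto (fun x : ℝ => 1/(4*t*(t - t^2/x)) - (x^2)⁻¹) atTop (𝓝 (1/(4*t^2))) := by
    have h1 : Tendsto (fun x : ℝ => 4*t*(t - t^2/x)) atTop (𝓝 (4*t^2)) := by
      have h0 := hc1.const_mul (4*t)
      convert h0 using 2
      ring
    have h2 : Tendsto (fun x : ℝ => 1/(4*t*(t - t^2/x))) atTop (𝓝 (1/(4*t^2))) :=
      tendsto_const_nhds.div h1 (by positivity)
    simpa using h2.sub hinvsq
  have habq : Tendsto (fun x : ℝ => (x^2/(4*t^2)-1) / (x^2/(4*t*(t - t^2/x))-1)) atTop (𝓝 1) := by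
    have h := hnum.div hden (by positivity : (1:ℝ)/(4*t^2) ≠ 0)
    rw [div_self (by positivity : (1:ℝ)/(4*t^2) ≠ 0)] at h
    apply h.congr'
    filter_upwards [eventually_ge_atTop (3*t), eventually_ge_atTop 3] with x hx h3
    have hx0 : (0:ℝ) < x := lt_of_lt_of_le (by norm_num) h3
    have hδt : t^2/x ≤ t/3 := by
      rw [div_le_div_iff₀ hx0 (by norm_num)]; nlinarith
    have hul : (0:ℝ) < t - t^2/x := by linarith
    have h9 : 9*t^2 ≤ x^2 := by
      nlinarith [mul_le_mul hx hx (by positivity : (0:ℝ) ≤ 3*t) (le_trans (by positivity) hx)]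
    have hδp : (0:ℝ) < t^2/x := by positivity
    have hle4 : 4*t*(t - t^2/x) ≤ 4*t^2 := by nlinarith [mul_pos ht hδp]
    simp only [Pi.div_apply]
    rw [div_eq_div_iff]
    · field_simp
    · have : (0:ℝ) < 1/(4*t*(t - t^2/x)) - (x^2)⁻¹ := by
        rw [sub_pos, inv_lt_iff_one_lt_mul₀ (by positivity), one_div, ← div_eq_inv_mul,
          lt_div_iff₀ (by positivity)]
        nlinarith
      exact this.ne'
    · have h54 : (5/4:ℝ) ≤ x^2/(4*t^2)-1 := by
        rw [le_sub_iff_add_le, le_div_iff₀ (by positivity)]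
        nlinarith
      have ha0 : (0:ℝ) < x^2/(4*t^2)-1 := lt_of_lt_of_le (by norm_num) h54
      have hab : x^2/(4*t^2)-1 ≤ x^2/(4*t*(t - t^2/x))-1 := by
        apply sub_le_sub_right
        apply div_le_div_of_nonneg_left (by positivity) (by positivity)
        exact hle4
      exact (lt_of_lt_of_le ha0 hab).ne'
  -- first upper-bound term → 0
  have hxe : Tendsto (fun x : ℝ => x^2 * Real.exp (-(x/8))) atTop (𝓝 0) := by
    have h := (tendsto_pow_mul_exp_neg_atTop_nhds_zero 2).comp hx8
    have h64 := h.const_mul (64:ℝ)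
    simp only [mul_zero] at h64
    apply h64.congr
    intro x
    simp only [Function.comp]
    ring
  have hT1 : Tendsto (fun x : ℝ => 4*t^2*(x^2/(4*t^2)-1) *
      (t * (Real.exp t * ((Nat.factorial ⌈ν+1⌉₊ : ℝ) * t ^ (-(ν+1) + (⌈ν+1⌉₊ : ℝ)) / (t*x/8) ^ ⌈ν+1⌉₊)
        * Real.exp (-(x/8))))) atTop (𝓝 0) := by
    set n := ⌈ν+1⌉₊
    set F : ℝ := (Nat.factorial n : ℝ) * t ^ (-(ν+1) + (n : ℝ)) with hF
    have hF0 : 0 ≤ F := by positivity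
    apply squeeze_zero' (g := fun x : ℝ => (t * Real.exp t * F * (8/t)^n) * (x^2 * Real.exp (-(x/8))))
    · filter_upwards [eventually_ge_atTop (3*t), eventually_ge_atTop 3] with x hx h3
      have hx0 : (0:ℝ) < x := lt_of_lt_of_le (by norm_num) h3
      have h54 : (5/4:ℝ) ≤ x^2/(4*t^2)-1 := by
        rw [le_sub_iff_add_le, le_div_iff₀ (by positivity)]
        nlinarith
      apply mul_nonneg (mul_nonneg (by positivity : (0:ℝ) ≤ 4*t^2) (by linarith))
      apply mul_nonneg ht.le
      exact mul_nonneg (mul_nonneg (Real.exp_pos t).le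
        (div_nonneg hF0 (by positivity))) (Real.exp_pos _).le
    · filter_upwards [eventually_ge_atTop (3*t), eventually_ge_atTop 3] with x hx h3
      have hx0 : (0:ℝ) < x := lt_of_lt_of_le (by norm_num) h3
      have hkey : (8/(t*x))^n ≤ (8/t)^n := by
        apply pow_le_pow_left₀ (by positivity)
        rw [div_le_div_iff₀ (by positivity) (by positivity)]
        nlinarith
      have hinv : (F / (t*x/8) ^ n) = F * ((8/(t*x))^n) := by
        rw [div_pow, div_pow, div_div_eq_mul_div, mul_div_assoc]
      have h1 : x^2/(4*t^2)-1 ≤ x^2/(4*t^2) := by linarith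
      have hc0 : (0:ℝ) ≤ t*(Real.exp t * (F*((8/(t*x))^n)) * Real.exp (-(x/8))) :=
        mul_nonneg ht.le (mul_nonneg (mul_nonneg (Real.exp_pos t).le
          (mul_nonneg hF0 (by positivity))) (Real.exp_pos _).le)
      rw [hinv]
      calc 4*t^2*(x^2/(4*t^2)-1) * (t*(Real.exp t * (F*((8/(t*x))^n)) * Real.exp (-(x/8))))
          ≤ 4*t^2*(x^2/(4*t^2)) * (t*(Real.exp t * (F*((8/t)^n)) * Real.exp (-(x/8)))) := by
            apply mul_le_mul ?_ ?_ hc0 (by positivity)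
            · apply mul_le_mul_of_nonneg_left h1 (by positivity)
            · apply mul_le_mul_of_nonneg_left ?_ ht.le
              apply mul_le_mul_of_nonneg_right ?_ (Real.exp_pos _).le
              exact mul_le_mul_of_nonneg_left (mul_le_mul_of_nonneg_left hkey hF0)
                (Real.exp_pos _).le
        _ = (t * Real.exp t * F * (8/t)^n) * (x^2 * Real.exp (-(x/8))) := by
            field_simp
    · simpa using hxe.const_mul (t * Real.exp t * F * (8/t)^n)
  -- assemble
  have hupper : Tendsto (fun x : ℝ => 4*t^2*(x^2/(4*t^2)-1) *
      (t * (Real.exp t * ((Nat.factorial ⌈ν+1⌉₊ : ℝ) * t ^ (-(ν+1) + (⌈ν+1⌉₊ : ℝ)) / (t*x/8) ^ ⌈ν+1⌉₊)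
        * Real.exp (-(x/8))))
      + 4*t^2 * (max ((t - t^2/x) ^ (-(ν+1))) (t ^ (-(ν+1)))) *
          (1 - Real.exp (-((x^2/(4*t^2)-1) * (t^2/x))))) atTop (𝓝 (4 * t^2 * t ^ (-(ν+1)))) := by
    have h := hT1.add (((tendsto_const_nhds (x := 4*t^2)).mul hM).mul
      ((tendsto_const_nhds (x := (1:ℝ))).sub hexpa))
    simpa using h
  have hlower : Tendsto (fun x : ℝ => 4*t^2 * (min ((t - t^2/x) ^ (-(ν+1))) (t ^ (-(ν+1)))) *
        ((x^2/(4*t^2)-1) / (x^2/(4*t*(t - t^2/x))-1)) *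
        (1 - Real.exp (-((x^2/(4*t*(t - t^2/x))-1) * (t^2/x))))) atTop
      (𝓝 (4 * t^2 * t ^ (-(ν+1)))) := by
    have h := (((tendsto_const_nhds (x := 4*t^2)).mul hm).mul habq).mul
      ((tendsto_const_nhds (x := (1:ℝ))).sub hexpb)
    simpa using h
  apply tendsto_of_tendsto_of_tendsto_of_le_of_le' hlower hupper
  · filter_upwards [eventually_ge_atTop (3*t), eventually_ge_atTop 3] with x hx h3
    exact my_lower ν t x ht hx h3
  · filter_upwards [eventually_ge_atTop (3*t), eventually_ge_atTop 3] with x hx h3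
    exact my_upper ν t x ht hx h3

theorem stmt_16 (ν t : ℝ) (ht : 0 < t) :
    Tendsto (fun x : ℝ =>
        shu ν x t * (2*t) ^ (ν-1) * (x^2 - 4*t^2) * Real.exp (x^2 / (4*t) + t) / x ^ ν)
      atTop (nhds 1) := by
  have h := (core ν t ht).const_mul (t ^ (ν-1) / 4)
  have hlim : t ^ (ν-1) / 4 * (4 * t^2 * t ^ (-(ν+1))) = 1 := by
    have h2 : (t:ℝ) ^ (2:ℕ) = t ^ ((2:ℕ):ℝ) := (Real.rpow_natCast t 2).symm
    have key : t ^ (ν-1) * (t ^ ((2:ℕ):ℝ) * t ^ (-(ν+1))) = 1 := by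
      rw [← Real.rpow_add ht, ← Real.rpow_add ht,
        show ν - 1 + (((2:ℕ):ℝ) + -(ν+1)) = 0 by push_cast; ring, Real.rpow_zero]
    calc t ^ (ν-1) / 4 * (4 * t^2 * t ^ (-(ν+1)))
        = t ^ (ν-1) * (t ^ ((2:ℕ):ℝ) * t ^ (-(ν+1))) := by rw [← h2]; ring
      _ = 1 := key
  rw [hlim] at h
  refine h.congr' ?_
  filter_upwards [eventually_gt_atTop (0:ℝ)] with x hx
  have hxν : (0:ℝ) < x ^ ν := Real.rpow_pos_of_pos hx ν
  have h2ν : (0:ℝ) < (2:ℝ) ^ ν := Real.rpow_pos_of_pos two_pos ν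
  -- rewrite shu's interval integral as Ioc set integral, then fold exp E inside
  have hE : Real.exp (x^2/(4*t) + t) *
      (∫ τ in Set.Ioc (0:ℝ) t, τ ^ (-(ν+1)) * Real.exp (-τ - x^2 / (4*τ)))
      = ∫ τ in Set.Ioc (0:ℝ) t, τ ^ (-(ν+1)) * Real.exp (-((t-τ) * (x^2/(4*t*τ) - 1))) := by
    rw [← MeasureTheory.integral_const_mul]
    refine MeasureTheory.setIntegral_congr_fun measurableSet_Ioc (fun τ hτ => ?_)
    have hτ0 : τ ≠ 0 := ne_of_gt hτ.1
    rw [mul_comm (Real.exp _), mul_assoc, ← Real.exp_add]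
    congr 2
    field_simp
    ring
  have hshu : shu ν x t = (1/2) * (x/2) ^ ν *
      ∫ τ in Set.Ioc (0:ℝ) t, τ ^ (-(ν+1)) * Real.exp (-τ - x^2 / (4*τ)) := by
    rw [shu, intervalIntegral.integral_of_le ht.le]
  rw [hshu]
  set J := ∫ τ in Set.Ioc (0:ℝ) t, τ ^ (-(ν+1)) * Real.exp (-τ - x^2 / (4*τ)) with hJ
  set G := ∫ τ in Set.Ioc (0:ℝ) t, τ ^ (-(ν+1)) * Real.exp (-((t-τ) * (x^2/(4*t*τ) - 1))) with hG
  have hcoef : (x/2) ^ ν = x ^ ν / 2 ^ ν := Real.div_rpow hx.le (by norm_num) ν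
  have hmul : ((2*t):ℝ) ^ (ν-1) = 2 ^ (ν-1) * t ^ (ν-1) := Real.mul_rpow (by norm_num) ht.le
  have h2sub : (2:ℝ) ^ (ν-1) = 2 ^ ν / 2 := by
    rw [Real.rpow_sub two_pos, Real.rpow_one]
  rw [hcoef, hmul, h2sub]
  rw [← hE]
  field_simp
  ring
end
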